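/- arXiv:1105.1571 — 5 statements merged into one kernel-verified Lean document; each statement's English description precedes it below -/
import Mathlib

section
/- Let ψ : ℝ → ℂ be a Schwartz function whose Fourier transform ψ̂ is supported in [1−Δ, 1+Δ] with 0 < Δ < 1. Let η > 0, A ≠ 0, and f(t) = A·cos(2πηt). Then for every a > 0 and b ∈ ℝ with W_f(a,b) ≠ 0, the map b ↦ W_f(a,b) is differentiable at b and the phase transform satisfies ω_f(a,b) := ∂_b W_f(a,b) / (2πi·W_f(a,b)) = η. That is, the synchrosqueezing phase transform recovers the instantaneous frequency of a pure harmonic exactly. -/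
open MeasureTheory

/-- The continuous wavelet transform
`W_f(a,b) = a^{-1/2} ∫ f(t) conj(ψ((t-b)/a)) dt`. -/
noncomputable def CWT (ψ f : ℝ → ℂ) (a b : ℝ) : ℂ :=
  ((Real.sqrt a : ℝ) : ℂ)⁻¹ * ∫ t : ℝ, f t * (starRingEnd ℂ) (ψ ((t - b) / a))

private lemma integrable_conj_comp {g : ℝ → ℂ} (h : Integrable g) :
    Integrable (fun x => (starRingEnd ℂ) (g x)) :=
  ⟨Complex.continuous_conj.comp_aestronglyMeasurable h.1,
    by simpa [HasFiniteIntegral] using h.2⟩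

private lemma norm_exp_mul_ofReal (c : ℂ) (hc : c.re = 0) (t : ℝ) :
    ‖Complex.exp (c * t)‖ = 1 := by
  rw [Complex.norm_exp]
  have h : (c * (t : ℂ)).re = 0 := by simp [Complex.mul_re, hc]
  simp [h]

private lemma integrable_exp_mul_conj (ψ : SchwartzMap ℝ ℂ) (a b : ℝ) (ha : a ≠ 0)
    (c : ℂ) (hc : c.re = 0) :
    Integrable (fun t : ℝ => Complex.exp (c * t) * (starRingEnd ℂ) (ψ ((t - b) / a))) := by
  have h1 : Integrable (fun t : ℝ => (starRingEnd ℂ) (ψ ((t - b) / a))) :=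
    integrable_conj_comp ((ψ.integrable.comp_div ha).comp_sub_right b)
  refine h1.bdd_mul (c := 1) ?_ (Filter.Eventually.of_forall fun t => le_of_eq (norm_exp_mul_ofReal c hc t))
  exact (Complex.continuous_exp.comp
    (continuous_const.mul Complex.continuous_ofReal)).aestronglyMeasurable

private lemma shift_scale (ψ : SchwartzMap ℝ ℂ) (a b : ℝ) (ha : 0 < a) (c : ℂ) :
    ∫ t : ℝ, Complex.exp (c * t) * (starRingEnd ℂ) (ψ ((t - b) / a)) =
      Complex.exp (c * b) *
        ((a : ℂ) * ∫ s : ℝ, Complex.exp (c * a * s) * (starRingEnd ℂ) (ψ s)) := by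
  have h1 : ∫ t : ℝ, Complex.exp (c * t) * (starRingEnd ℂ) (ψ ((t - b) / a)) =
      ∫ t : ℝ, (fun u : ℝ => Complex.exp (c * (u + b)) * (starRingEnd ℂ) (ψ (u / a))) (t - b) := by
    congr 1 with t
    simp [sub_add_cancel]
  rw [h1, integral_sub_right_eq_self
    (fun u : ℝ => Complex.exp (c * (u + b)) * (starRingEnd ℂ) (ψ (u / a))) b]
  have h2 : ∫ u : ℝ, Complex.exp (c * (u + b)) * (starRingEnd ℂ) (ψ (u / a)) =
      ∫ u : ℝ, (fun s : ℝ => Complex.exp (c * (a * s + b)) * (starRingEnd ℂ) (ψ s)) (u / a) := by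
    congr 1 with u
    have hu : ((a : ℝ) : ℂ) * ((u / a : ℝ) : ℂ) = (u : ℂ) := by
      push_cast
      rw [mul_comm]
      exact div_mul_cancel₀ _ (Complex.ofReal_ne_zero.2 ha.ne')
    simp only []
    rw [hu]
  rw [h2, MeasureTheory.Measure.integral_comp_div
    (fun s : ℝ => Complex.exp (c * (a * s + b)) * (starRingEnd ℂ) (ψ s)) a,
    abs_of_pos ha, Complex.real_smul]
  rw [show Complex.exp (c * (b : ℂ)) *
      ((a : ℂ) * ∫ s : ℝ, Complex.exp (c * a * s) * (starRingEnd ℂ) (ψ s)) =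
      (a : ℂ) * ∫ s : ℝ, Complex.exp (c * (b : ℂ)) *
        (Complex.exp (c * a * s) * (starRingEnd ℂ) (ψ s)) from by
    rw [integral_const_mul]; ring]
  congr 1
  refine integral_congr_ae (Filter.Eventually.of_forall fun s => ?_)
  simp only []
  rw [mul_add, Complex.exp_add]
  ring

private lemma conj_fourier (ψ : SchwartzMap ℝ ℂ) (w : ℝ) :
    (starRingEnd ℂ) (FourierTransform.fourier (⇑ψ : ℝ → ℂ) w) =
      ∫ s : ℝ, Complex.exp (((2 * Real.pi * w : ℝ) : ℂ) * Complex.I * s) *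
        (starRingEnd ℂ) (ψ s) := by
  rw [Real.fourier_real_eq_integral_exp_smul, ← integral_conj]
  congr 1 with s
  rw [smul_eq_mul, map_mul, ← Complex.exp_conj]
  congr 1
  simp only [map_mul, Complex.conj_ofReal, Complex.conj_I]
  push_cast
  ring

theorem stmt1 (ψ : SchwartzMap ℝ ℂ) (Δ : ℝ) (hΔ0 : 0 < Δ) (hΔ1 : Δ < 1)
    (hsupp : ∀ ξ : ℝ, ξ ∉ Set.Icc (1 - Δ) (1 + Δ) → FourierTransform.fourier (⇑ψ : ℝ → ℂ) ξ = 0)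
    (η A : ℝ) (hη : 0 < η) (hA : A ≠ 0) (f : ℝ → ℂ)
    (hf : ∀ t : ℝ, f t = (A : ℂ) * (Real.cos (2 * Real.pi * η * t) : ℝ)) :
    ∀ a : ℝ, 0 < a → ∀ b : ℝ, CWT (⇑ψ) f a b ≠ 0 →
      ∃ W' : ℂ, HasDerivAt (fun b' : ℝ => CWT (⇑ψ) f a b') W' b ∧
        W' / (2 * Real.pi * Complex.I * CWT (⇑ψ) f a b) = (η : ℂ) := by
  intro a ha b hWne
  set c : ℂ := ((2 * Real.pi * η : ℝ) : ℂ) * Complex.I with hc_def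
  have hcre : c.re = 0 := by simp [hc_def]
  have hncre : (-c).re = 0 := by simp [hc_def]
  set K : ℂ := ((Real.sqrt a : ℝ) : ℂ)⁻¹ * ((A : ℂ) / 2) * (a : ℂ) *
      (starRingEnd ℂ) (FourierTransform.fourier (⇑ψ : ℝ → ℂ) (η * a)) with hK_def
  -- the inner oscillatory integrals
  have hplus : ∫ s : ℝ, Complex.exp (c * a * s) * (starRingEnd ℂ) (ψ s) =
      (starRingEnd ℂ) (FourierTransform.fourier (⇑ψ : ℝ → ℂ) (η * a)) := by
    rw [conj_fourier ψ (η * a)]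
    congr 1 with s
    congr 2
    rw [hc_def]
    push_cast
    ring
  have hminus : ∫ s : ℝ, Complex.exp ((-c) * a * s) * (starRingEnd ℂ) (ψ s) = 0 := by
    have h0 : FourierTransform.fourier (⇑ψ : ℝ → ℂ) (-(η * a)) = 0 := by
      apply hsupp
      simp only [Set.mem_Icc, not_and_or, not_le]
      left
      nlinarith [mul_pos hη ha]
    have heq : ∫ s : ℝ, Complex.exp ((-c) * a * s) * (starRingEnd ℂ) (ψ s) =
        (starRingEnd ℂ) (FourierTransform.fourier (⇑ψ : ℝ → ℂ) (-(η * a))) := by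
      rw [conj_fourier ψ (-(η * a))]
      congr 1 with s
      congr 2
      rw [hc_def]
      push_cast
      ring
    rw [heq, h0, map_zero]
  -- the closed formula for the CWT
  have hW : ∀ b' : ℝ, CWT (⇑ψ) f a b' = K * Complex.exp (c * b') := by
    intro b'
    unfold CWT
    have hpt : ∀ t : ℝ, f t * (starRingEnd ℂ) (ψ ((t - b') / a)) =
        ((A : ℂ) / 2) * (Complex.exp (c * t) * (starRingEnd ℂ) (ψ ((t - b') / a))) +
        ((A : ℂ) / 2) * (Complex.exp ((-c) * t) * (starRingEnd ℂ) (ψ ((t - b') / a))) := by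
      intro t
      rw [hf t, Complex.ofReal_cos]
      have hcos : Complex.cos ((2 * Real.pi * η * t : ℝ) : ℂ) =
          (Complex.exp (c * t) + Complex.exp ((-c) * t)) / 2 := by
        rw [Complex.cos]
        congr 2
        · rw [hc_def]; push_cast; ring
        · rw [hc_def]; push_cast; ring
      rw [hcos]; ring
    rw [show (fun t : ℝ => f t * (starRingEnd ℂ) (ψ ((t - b') / a))) =
        (fun t : ℝ =>
          ((A : ℂ) / 2) * (Complex.exp (c * t) * (starRingEnd ℂ) (ψ ((t - b') / a))) +
          ((A : ℂ) / 2) * (Complex.exp ((-c) * t) * (starRingEnd ℂ) (ψ ((t - b') / a))))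
      from funext hpt]
    rw [integral_add
      ((integrable_exp_mul_conj ψ a b' ha.ne' c hcre).const_mul _)
      ((integrable_exp_mul_conj ψ a b' ha.ne' (-c) hncre).const_mul _),
      integral_const_mul, integral_const_mul,
      shift_scale ψ a b' ha c, shift_scale ψ a b' ha (-c), hplus, hminus]
    rw [hK_def]
    ring
  -- the derivative
  have h1 : HasDerivAt (fun y : ℝ => ((y : ℝ) : ℂ)) 1 b := by
    simpa using (hasDerivAt_id b).ofReal_comp
  have h2 : HasDerivAt (fun y : ℝ => c * (y : ℂ)) c b := by
    simpa using h1.const_mul c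
  have h3 := h2.cexp
  have h4 := h3.const_mul K
  refine ⟨K * (Complex.exp (c * b) * c), ?_, ?_⟩
  · rw [show (fun b' : ℝ => CWT (⇑ψ) f a b') =
        (fun b' : ℝ => K * Complex.exp (c * b')) from funext hW]
    exact h4
  · rw [hW b]
    have hKE : K * Complex.exp (c * b) ≠ 0 := by rw [← hW b]; exact hWne
    have h2pi : (2 * (Real.pi : ℂ) * Complex.I) ≠ 0 :=
      mul_ne_zero (mul_ne_zero two_ne_zero (Complex.ofReal_ne_zero.2 Real.pi_ne_zero))
        Complex.I_ne_zero
    rw [div_eq_iff (mul_ne_zero h2pi hKE), hc_def]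
    push_cast
    ring
end

section
/- Let ψ : ℝ → ℂ be a Schwartz function, and fix ε > 0 and 0 < c₁ ≤ M₂. Let g(t) = A(t)·exp(2πiφ(t)) where A : ℝ → ℝ is C¹, bounded and positive, φ : ℝ → ℝ is C² with c₁ ≤ φ'(t) ≤ M₂, |A'(t)| ≤ ε·φ'(t) and |φ''(t)| ≤ ε·φ'(t) for all t. Then for all a > 0 and b ∈ ℝ, |W_g(a,b) − A(b)·exp(2πiφ(b))·a^{1/2}·conj(ψ̂(aφ'(b)))| ≤ ε·M₂·a^{3/2}·(I₁ + π·‖A‖∞·a·I₂), where I₁ = ∫_ℝ |x|·|ψ(x)| dx, I₂ = ∫_ℝ x²·|ψ(x)| dx, and ‖A‖∞ = sup_t A(t). -/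
open MeasureTheory

section Aux

lemma expI_hasDerivAt' (θ : ℝ) :
    HasDerivAt (fun t : ℝ => Complex.exp ((t:ℂ) * Complex.I))
      (Complex.I * Complex.exp ((θ:ℂ) * Complex.I)) θ := by
  have h1 : HasDerivAt (fun z : ℂ => Complex.exp (z * Complex.I))
      (Complex.exp ((θ:ℂ) * Complex.I) * Complex.I) (θ:ℂ) := by
    exact (Complex.hasDerivAt_exp ((θ:ℂ) * Complex.I)).comp (θ:ℂ)
      (hasDerivAt_mul_const Complex.I)
  simpa [mul_comm] using h1.comp_ofReal

lemma expI_lip' (r₁ r₂ : ℝ) :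
    ‖Complex.exp ((r₁:ℂ) * Complex.I) - Complex.exp ((r₂:ℂ) * Complex.I)‖ ≤ |r₁ - r₂| := by
  have := convex_univ.norm_image_sub_le_of_norm_hasDerivWithin_le
    (f := fun t : ℝ => Complex.exp ((t:ℂ) * Complex.I))
    (f' := fun θ : ℝ => Complex.I * Complex.exp ((θ:ℂ) * Complex.I)) (C := 1)
    (fun θ _ => (expI_hasDerivAt' θ).hasDerivWithinAt)
    (fun θ _ => by simp [Complex.norm_exp]) (Set.mem_univ r₂)
    (Set.mem_univ r₁)
  simpa [Real.norm_eq_abs] using this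

lemma lip_of_deriv_bound' {f : ℝ → ℝ} {D : ℝ} (hf : Differentiable ℝ f)
    (hD : ∀ t, |deriv f t| ≤ D) (y z : ℝ) : |f y - f z| ≤ D * |y - z| := by
  have := convex_univ.norm_image_sub_le_of_norm_hasDerivWithin_le
    (f := f) (f' := deriv f) (C := D)
    (fun t _ => (hf t).hasDerivAt.hasDerivWithinAt)
    (fun t _ => by simpa [Real.norm_eq_abs] using hD t) (Set.mem_univ z) (Set.mem_univ y)
  simpa [Real.norm_eq_abs] using this

lemma taylor_bound' {φ : ℝ → ℝ} {D : ℝ} (hφ : ContDiff ℝ 2 φ)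
    (hD : ∀ t, |deriv (deriv φ) t| ≤ D) (b s : ℝ) :
    |φ (b + s) - φ b - deriv φ b * s| ≤ D / 2 * s ^ 2 := by
  have hφ2 : ContDiff ℝ (1 + 1) φ := by norm_num; exact hφ
  obtain ⟨hφd, -, hφ'c⟩ := contDiff_succ_iff_deriv.mp hφ2
  have hφ'd : Differentiable ℝ (deriv φ) := hφ'c.differentiable one_ne_zero
  have hDnn : 0 ≤ D := le_trans (abs_nonneg _) (hD 0)
  set f : ℝ → ℝ := fun u => φ (b + u) - φ b - deriv φ b * u with hf
  have hder : ∀ u : ℝ, HasDerivAt f (deriv φ (b + u) - deriv φ b) u := by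
    intro u
    have h1 : HasDerivAt (fun u : ℝ => φ (b + u)) (deriv φ (b + u) * 1) u :=
      (hφd (b + u)).hasDerivAt.comp u ((hasDerivAt_id u).const_add b)
    have h2 : HasDerivAt (fun u : ℝ => deriv φ b * u) (deriv φ b) u := by
      simpa using (hasDerivAt_id u).const_mul (deriv φ b)
    have h3 := (h1.sub_const (φ b)).sub h2; rw [mul_one] at h3; exact h3
  have hcont : Continuous fun u : ℝ => deriv φ (b + u) - deriv φ b :=
    (hφ'c.continuous.comp (continuous_const.add continuous_id)).sub continuous_const
  have hFTC : ∫ u in (0:ℝ)..s, (deriv φ (b + u) - deriv φ b) = f s - f 0 :=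
    intervalIntegral.integral_eq_sub_of_hasDerivAt (fun u _ => hder u)
      (hcont.intervalIntegrable 0 s)
  have hf0 : f 0 = 0 := by simp [hf]
  have hfs : f s = ∫ u in (0:ℝ)..s, (deriv φ (b + u) - deriv φ b) := by
    rw [hFTC, hf0, sub_zero]
  set B : ℝ → ℝ := fun u => D * |u| with hB
  have hbound : ∀ u : ℝ, ‖deriv φ (b + u) - deriv φ b‖ ≤ B u := by
    intro u
    simpa [hB, Real.norm_eq_abs] using lip_of_deriv_bound' hφ'd hD (b + u) b
  have hInt : |f s| ≤ |∫ u in (0:ℝ)..s, B u| := by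
    rw [hfs, ← Real.norm_eq_abs]
    apply intervalIntegral.norm_integral_le_abs_of_norm_le
    · exact Filter.Eventually.of_forall (fun u => hbound u)
    · exact ((continuous_const.mul continuous_abs).intervalIntegrable 0 s)
  have hDs : 0 ≤ D / 2 * s ^ 2 := mul_nonneg (by linarith) (sq_nonneg s)
  have hval : |∫ u in (0:ℝ)..s, B u| = D / 2 * s ^ 2 := by
    rcases le_or_gt 0 s with h | h
    · have e1 : ∫ u in (0:ℝ)..s, B u = D / 2 * s ^ 2 := by
        simp only [hB]
        rw [intervalIntegral.integral_const_mul]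
        have e2 : ∫ u in (0:ℝ)..s, |u| = ∫ u in (0:ℝ)..s, u := by
          apply intervalIntegral.integral_congr
          intro u hu
          rw [Set.uIcc_of_le h] at hu
          exact abs_of_nonneg hu.1
        rw [e2, integral_id]; ring
      rw [e1, abs_of_nonneg hDs]
    · have e1 : ∫ u in (0:ℝ)..s, B u = -(D / 2 * s ^ 2) := by
        simp only [hB]
        rw [intervalIntegral.integral_const_mul]
        have e2 : ∫ u in (0:ℝ)..s, |u| = ∫ u in (0:ℝ)..s, -u := by
          apply intervalIntegral.integral_congr
          intro u hu
          rw [Set.uIcc_of_ge h.le] at hu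
          exact abs_of_nonpos hu.2
        rw [e2, intervalIntegral.integral_neg, integral_id]; ring
      rw [e1, abs_neg, abs_of_nonneg hDs]
  calc |f s| ≤ _ := hInt
    _ = _ := hval

lemma normE' (c r : ℝ) : ‖(c:ℂ) * Complex.exp ((r:ℂ) * Complex.I)‖ = |c| := by
  simp [Complex.norm_exp]

lemma conj_fourierIntegral' (ψ : SchwartzMap ℝ ℂ) (ξ : ℝ) :
    (starRingEnd ℂ) (FourierTransform.fourier (⇑ψ : ℝ → ℂ) ξ)
      = ∫ v : ℝ, Complex.exp (((2 * Real.pi * (ξ * v) : ℝ) : ℂ) * Complex.I) *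
          (starRingEnd ℂ) (ψ v) := by
  rw [Real.fourier_real_eq_integral_exp_smul, ← integral_conj]
  congr 1
  ext v
  rw [smul_eq_mul, map_mul, ← Complex.exp_conj]
  congr 2
  push_cast
  simp only [map_mul, Complex.conj_I, Complex.conj_ofReal, map_neg, map_ofNat]
  ring

lemma integral_shift_scale' (F : ℝ → ℂ) (a b : ℝ) (ha : 0 < a) :
    ∫ t, F t = a • ∫ x, F (b + a * x) := by
  have h1 : ∫ x : ℝ, F (b + a * x) = |a⁻¹| • ∫ y : ℝ, F (b + y) :=
    MeasureTheory.Measure.integral_comp_mul_left (fun y => F (b + y)) a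
  rw [h1, integral_add_left_eq_self (μ := volume) F b, smul_smul,
    abs_of_pos (inv_pos.mpr ha), mul_inv_cancel₀ ha.ne', one_smul]

end Aux

theorem stmt3 (ψ : SchwartzMap ℝ ℂ) (ε c₁ M₂ : ℝ)
    (hε : 0 < ε) (hc₁ : 0 < c₁) (hc₁M₂ : c₁ ≤ M₂)
    (A : ℝ → ℝ) (φ : ℝ → ℝ) (g : ℝ → ℂ)
    (hg : ∀ t : ℝ, g t = (A t : ℂ) * Complex.exp (2 * Real.pi * Complex.I * φ t))
    (hA : ContDiff ℝ 1 A) (hAbd : BddAbove (Set.range A)) (hApos : ∀ t : ℝ, 0 < A t)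
    (hφ : ContDiff ℝ 2 φ)
    (hφ'lo : ∀ t : ℝ, c₁ ≤ deriv φ t) (hφ'hi : ∀ t : ℝ, deriv φ t ≤ M₂)
    (hA' : ∀ t : ℝ, |deriv A t| ≤ ε * deriv φ t)
    (hφ'' : ∀ t : ℝ, |deriv (deriv φ) t| ≤ ε * deriv φ t)
    (I₁ I₂ Asup : ℝ)
    (hI₁ : I₁ = ∫ x : ℝ, |x| * ‖ψ x‖) (hI₂ : I₂ = ∫ x : ℝ, x ^ 2 * ‖ψ x‖)
    (hAsup : Asup = sSup (Set.range A)) :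
    ∀ a : ℝ, 0 < a → ∀ b : ℝ,
      ‖CWT (⇑ψ) g a b -
          (A b : ℂ) * Complex.exp (2 * Real.pi * Complex.I * φ b) *
            ((Real.sqrt a : ℝ) : ℂ) *
            (starRingEnd ℂ) (FourierTransform.fourier (⇑ψ : ℝ → ℂ) (a * deriv φ b))‖ ≤
        ε * M₂ * Real.sqrt a ^ 3 * (I₁ + Real.pi * Asup * a * I₂) := by
  intro a ha b
  set D : ℝ := ε * M₂ with hD
  have hM₂ : 0 < M₂ := lt_of_lt_of_le hc₁ hc₁M₂
  have hDpos : 0 < D := mul_pos hε hM₂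
  have hDA : ∀ t, |deriv A t| ≤ D :=
    fun t => (hA' t).trans (mul_le_mul_of_nonneg_left (hφ'hi t) hε.le)
  have hDφ'' : ∀ t, |deriv (deriv φ) t| ≤ D :=
    fun t => (hφ'' t).trans (mul_le_mul_of_nonneg_left (hφ'hi t) hε.le)
  set s : ℝ := Real.sqrt a with hsdef
  have hspos : 0 < s := Real.sqrt_pos.mpr ha
  have hs2 : s ^ 2 = a := Real.sq_sqrt ha.le
  -- rewrite g in terms of real-argument exponentials
  have hgE : ∀ t : ℝ, g t
      = (A t : ℂ) * Complex.exp (((2 * Real.pi * φ t : ℝ) : ℂ) * Complex.I) := by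
    intro t
    rw [hg t]
    congr 2
    push_cast
    ring
  have hAle : ∀ t, A t ≤ Asup := by
    intro t
    rw [hAsup]
    exact le_csSup hAbd ⟨t, rfl⟩
  have hAsup0 : 0 ≤ Asup := le_trans (hApos b).le (hAle b)
  -- norm of g
  have hgnorm : ∀ t : ℝ, ‖g t‖ = A t := by
    intro t
    rw [hgE t, normE', abs_of_nonneg (hApos t).le]
  have hgcont : Continuous g := by
    have : g = fun t => (A t : ℂ) * Complex.exp (((2 * Real.pi * φ t : ℝ) : ℂ) * Complex.I) :=
      funext hgE
    rw [this]
    exact (Complex.continuous_ofReal.comp hA.continuous).mul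
      (Complex.continuous_exp.comp ((Complex.continuous_ofReal.comp
        ((continuous_const.mul hφ.continuous))).mul continuous_const))
  have hψconj : Integrable (fun x : ℝ => (starRingEnd ℂ) (ψ x)) := by
    refine ((ψ.integrable (μ := volume)).norm).mono' ?_ ?_
    · exact (Complex.continuous_conj.comp ψ.continuous).aestronglyMeasurable
    · exact Filter.Eventually.of_forall fun x => by simp
  -- the two integrands
  set f₁ : ℝ → ℂ := fun x => g (b + a * x) * (starRingEnd ℂ) (ψ x) with hf₁
  set f₂ : ℝ → ℂ := fun x => (A b : ℂ) *
      Complex.exp (((2 * Real.pi * (φ b + a * deriv φ b * x) : ℝ) : ℂ) * Complex.I) *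
      (starRingEnd ℂ) (ψ x) with hf₂
  have hInt1 : Integrable f₁ := by
    refine hψconj.bdd_mul (c := Asup) ?_ (Filter.Eventually.of_forall ?_)
    · exact (hgcont.comp (continuous_const.add (continuous_const.mul
        continuous_id))).aestronglyMeasurable
    · intro x
      rw [hgnorm]
      exact hAle _
  have hInt2 : Integrable f₂ := by
    refine (hψconj.bdd_mul (c := Asup) ?_ (Filter.Eventually.of_forall ?_) : Integrable (fun x => ((A b : ℂ) *
        Complex.exp (((2 * Real.pi * (φ b + a * deriv φ b * x) : ℝ) : ℂ) * Complex.I)) *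
        (starRingEnd ℂ) (ψ x)))
    · apply Continuous.aestronglyMeasurable
      refine continuous_const.mul (Complex.continuous_exp.comp ?_)
      exact (Complex.continuous_ofReal.comp (continuous_const.mul
        (continuous_const.add (continuous_const.mul continuous_id)))).mul continuous_const
    · intro x
      rw [normE', abs_of_nonneg (hApos b).le]
      exact hAle b
  -- Step A : the wavelet transform after substitution t = b + a x
  have hEqA : CWT (⇑ψ) g a b = ((s : ℝ) : ℂ) * ∫ x, f₁ x := by
    rw [CWT]
    have hCV := integral_shift_scale' (fun t => g t * (starRingEnd ℂ) (ψ ((t - b) / a))) a b ha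
    have hsimp : ∀ x : ℝ, (b + a * x - b) / a = x := by
      intro x; field_simp; ring
    simp only [hsimp] at hCV
    rw [hCV, Complex.real_smul, ← mul_assoc]
    congr 1
    have haC : (a : ℂ) = ((s : ℝ) : ℂ) ^ 2 := by
      rw [← hs2]; push_cast; ring
    have hsne : ((s : ℝ) : ℂ) ≠ 0 := Complex.ofReal_ne_zero.mpr hspos.ne'
    rw [haC, ← hsdef]
    field_simp
  -- Step B : the main term as an integral
  have hEqB : (A b : ℂ) * Complex.exp (2 * Real.pi * Complex.I * φ b) *
      ((s : ℝ) : ℂ) * (starRingEnd ℂ) (FourierTransform.fourier (⇑ψ : ℝ → ℂ) (a * deriv φ b))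
      = ((s : ℝ) : ℂ) * ∫ x, f₂ x := by
    rw [conj_fourierIntegral' ψ (a * deriv φ b)]
    rw [show (A b : ℂ) * Complex.exp (2 * Real.pi * Complex.I * φ b) * ((s : ℝ) : ℂ) *
        (∫ v : ℝ, Complex.exp (((2 * Real.pi * (a * deriv φ b * v) : ℝ) : ℂ) * Complex.I) *
          (starRingEnd ℂ) (ψ v))
        = ((s : ℝ) : ℂ) * ((A b : ℂ) * Complex.exp (2 * Real.pi * Complex.I * φ b) *
          ∫ v : ℝ, Complex.exp (((2 * Real.pi * (a * deriv φ b * v) : ℝ) : ℂ) * Complex.I) *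
          (starRingEnd ℂ) (ψ v)) from by ring]
    congr 1
    rw [← MeasureTheory.integral_const_mul]
    congr 1
    ext v
    rw [hf₂]
    simp only
    rw [← mul_assoc, mul_assoc ((A b : ℂ)) (Complex.exp _), ← Complex.exp_add]
    congr 2
    push_cast
    ring
  -- the difference as a single integral
  have hkey : CWT (⇑ψ) g a b -
      (A b : ℂ) * Complex.exp (2 * Real.pi * Complex.I * φ b) * ((s : ℝ) : ℂ) *
        (starRingEnd ℂ) (FourierTransform.fourier (⇑ψ : ℝ → ℂ) (a * deriv φ b))
      = ((s : ℝ) : ℂ) * ∫ x, (f₁ x - f₂ x) := by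
    rw [hEqA, hEqB, ← mul_sub, integral_sub hInt1 hInt2]
  -- pointwise bound
  set bnd : ℝ → ℝ := fun x => D * a * (|x| * ‖ψ x‖)
      + Real.pi * Asup * D * a ^ 2 * (x ^ 2 * ‖ψ x‖) with hbnd
  have hAdiff : Differentiable ℝ A := hA.differentiable one_ne_zero
  have hpw : ∀ x : ℝ, ‖f₁ x - f₂ x‖ ≤ bnd x := by
    intro x
    have hfactor : f₁ x - f₂ x = (g (b + a * x) - (A b : ℂ) *
        Complex.exp (((2 * Real.pi * (φ b + a * deriv φ b * x) : ℝ) : ℂ) * Complex.I)) *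
        (starRingEnd ℂ) (ψ x) := by
      rw [hf₁, hf₂]; ring
    rw [hfactor, norm_mul, RCLike.norm_conj]
    have hsplit : g (b + a * x) - (A b : ℂ) *
        Complex.exp (((2 * Real.pi * (φ b + a * deriv φ b * x) : ℝ) : ℂ) * Complex.I)
        = ((A (b + a * x) - A b : ℝ) : ℂ) *
            Complex.exp (((2 * Real.pi * φ (b + a * x) : ℝ) : ℂ) * Complex.I)
          + (A b : ℂ) *
            (Complex.exp (((2 * Real.pi * φ (b + a * x) : ℝ) : ℂ) * Complex.I)
             - Complex.exp (((2 * Real.pi * (φ b + a * deriv φ b * x) : ℝ) : ℂ) * Complex.I)) := by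
      rw [hgE]
      push_cast
      ring
    have h1 : ‖((A (b + a * x) - A b : ℝ) : ℂ) *
        Complex.exp (((2 * Real.pi * φ (b + a * x) : ℝ) : ℂ) * Complex.I)‖ ≤ D * (a * |x|) := by
      rw [normE']
      have := lip_of_deriv_bound' hAdiff hDA (b + a * x) b
      simpa [add_sub_cancel_left, abs_mul, abs_of_pos ha] using this
    have h2 : ‖(A b : ℂ) *
        (Complex.exp (((2 * Real.pi * φ (b + a * x) : ℝ) : ℂ) * Complex.I)
         - Complex.exp (((2 * Real.pi * (φ b + a * deriv φ b * x) : ℝ) : ℂ) * Complex.I))‖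
        ≤ Asup * (Real.pi * D * (a ^ 2 * x ^ 2)) := by
      rw [norm_mul]
      have hE := expI_lip' (2 * Real.pi * φ (b + a * x))
        (2 * Real.pi * (φ b + a * deriv φ b * x))
      have htay := taylor_bound' hφ hDφ'' b (a * x)
      have habs : |2 * Real.pi * φ (b + a * x) - 2 * Real.pi * (φ b + a * deriv φ b * x)|
          = 2 * Real.pi * |φ (b + a * x) - φ b - deriv φ b * (a * x)| := by
        rw [show 2 * Real.pi * φ (b + a * x) - 2 * Real.pi * (φ b + a * deriv φ b * x)
          = 2 * Real.pi * (φ (b + a * x) - φ b - deriv φ b * (a * x)) from by ring]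
        rw [abs_mul, abs_of_pos (by positivity : (0:ℝ) < 2 * Real.pi)]
      have hEbound : ‖Complex.exp (((2 * Real.pi * φ (b + a * x) : ℝ) : ℂ) * Complex.I)
          - Complex.exp (((2 * Real.pi * (φ b + a * deriv φ b * x) : ℝ) : ℂ) * Complex.I)‖
          ≤ Real.pi * D * (a ^ 2 * x ^ 2) := by
        refine hE.trans ?_
        rw [habs]
        calc 2 * Real.pi * |φ (b + a * x) - φ b - deriv φ b * (a * x)|
            ≤ 2 * Real.pi * (D / 2 * (a * x) ^ 2) := by
              exact mul_le_mul_of_nonneg_left htay (by positivity)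
          _ = Real.pi * D * (a ^ 2 * x ^ 2) := by ring
      have hAbnorm : ‖((A b : ℝ) : ℂ)‖ = A b := by
        rw [Complex.norm_real, Real.norm_eq_abs, abs_of_nonneg (hApos b).le]
      rw [hAbnorm]
      have hnn : (0:ℝ) ≤ Real.pi * D * (a ^ 2 * x ^ 2) := by positivity
      calc A b * ‖_ - _‖ ≤ A b * (Real.pi * D * (a ^ 2 * x ^ 2)) :=
            mul_le_mul_of_nonneg_left hEbound (hApos b).le
        _ ≤ Asup * (Real.pi * D * (a ^ 2 * x ^ 2)) :=
            mul_le_mul_of_nonneg_right (hAle b) hnn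
    have hdiff : ‖g (b + a * x) - (A b : ℂ) *
        Complex.exp (((2 * Real.pi * (φ b + a * deriv φ b * x) : ℝ) : ℂ) * Complex.I)‖
        ≤ D * (a * |x|) + Asup * (Real.pi * D * (a ^ 2 * x ^ 2)) := by
      rw [hsplit]
      exact (norm_add_le _ _).trans (add_le_add h1 h2)
    calc ‖g (b + a * x) - (A b : ℂ) *
        Complex.exp (((2 * Real.pi * (φ b + a * deriv φ b * x) : ℝ) : ℂ) * Complex.I)‖ * ‖ψ x‖
        ≤ (D * (a * |x|) + Asup * (Real.pi * D * (a ^ 2 * x ^ 2))) * ‖ψ x‖ :=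
          mul_le_mul_of_nonneg_right hdiff (norm_nonneg _)
      _ = bnd x := by rw [hbnd]; ring
  -- integrability of the bound
  have hJ1 : Integrable (fun x : ℝ => |x| * ‖ψ x‖) := by
    simpa [Real.norm_eq_abs] using ψ.integrable_pow_mul (μ := volume) 1
  have hJ2 : Integrable (fun x : ℝ => x ^ 2 * ‖ψ x‖) := by
    simpa [Real.norm_eq_abs, sq_abs] using ψ.integrable_pow_mul (μ := volume) 2
  have hbndInt : Integrable bnd := by
    rw [hbnd]
    exact (hJ1.const_mul (D * a)).add (hJ2.const_mul (Real.pi * Asup * D * a ^ 2))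
  have hIbnd : ‖∫ x, (f₁ x - f₂ x)‖ ≤ ∫ x, bnd x :=
    norm_integral_le_of_norm_le hbndInt (Filter.Eventually.of_forall hpw)
  have hbndval : ∫ x, bnd x = D * a * I₁ + Real.pi * Asup * D * a ^ 2 * I₂ := by
    rw [hbnd]
    rw [integral_add (hJ1.const_mul (D * a)) (hJ2.const_mul (Real.pi * Asup * D * a ^ 2)),
      MeasureTheory.integral_const_mul, MeasureTheory.integral_const_mul, hI₁, hI₂]
  -- put everything together
  rw [hkey, norm_mul, Complex.norm_real, Real.norm_eq_abs, abs_of_pos hspos]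
  calc s * ‖∫ x, (f₁ x - f₂ x)‖ ≤ s * (D * a * I₁ + Real.pi * Asup * D * a ^ 2 * I₂) := by
        rw [← hbndval]
        exact mul_le_mul_of_nonneg_left hIbnd hspos.le
    _ = ε * M₂ * s ^ 3 * (I₁ + Real.pi * Asup * a * I₂) := by
        rw [hD, ← hs2]; ring
end

section
/- Let ψ : ℝ → ℂ be a Schwartz function whose Fourier transform ψ̂ is supported in [1−Δ, 1+Δ] with 0 < Δ < 1, and let f(t) = A(t)·cos(2πφ(t)) be an intrinsic-mode-type function with accuracy ε (parameters c₁, M₂). Then for all a > 0 and b ∈ ℝ, the map b ↦ W_f(a,b) is differentiable and |∂_b W_f(a,b) − πi·A(b)·φ'(b)·exp(2πiφ(b))·a^{1/2}·conj(ψ̂(aφ'(b)))| ≤ ε·M₂·a^{1/2}·(I₁' + π·‖A‖∞·a·I₂'), where I₁' = ∫_ℝ |x|·|ψ'(x)| dx and I₂' = ∫_ℝ x²·|ψ'(x)| dx. -/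
open MeasureTheory

section CwtHelpers

open Real intervalIntegral

lemma cwt_cov {E : Type*} [NormedAddCommGroup E] [NormedSpace ℝ E] (g : ℝ → E) {a : ℝ} (b : ℝ)
    (ha : 0 < a) : ∫ t : ℝ, g ((t - b) / a) = a • ∫ x : ℝ, g x := by
  have h1 : ∫ t : ℝ, g ((t - b) / a) = ∫ t : ℝ, (fun s => g (s / a)) (t - b) := rfl
  rw [h1, integral_sub_right_eq_self (fun s => g (s / a)) b,
    MeasureTheory.Measure.integral_comp_div g a, abs_of_pos ha]

lemma cwt_intg {E : Type*} [NormedAddCommGroup E] {g : ℝ → E} (hg : Integrable g) {a : ℝ} (b : ℝ)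
    (ha : a ≠ 0) : Integrable (fun t : ℝ => g ((t - b) / a)) :=
  (hg.comp_div ha).comp_sub_right b

lemma cwt_conj_int {g : ℝ → ℂ} (hg : Integrable g) :
    Integrable (fun t : ℝ => (starRingEnd ℂ) (g t)) := by
  refine (integrable_norm_iff ?_).1 (by simpa using hg.norm)
  exact (continuous_star.comp_aestronglyMeasurable hg.1 : _)

lemma cwt_conj_fourier (g : ℝ → ℂ) (c : ℝ) :
    ∫ x : ℝ, Complex.exp (((2 * Real.pi * c * x : ℝ) : ℂ) * Complex.I) * (starRingEnd ℂ) (g x)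
      = (starRingEnd ℂ) (FourierTransform.fourier g c) := by
  rw [Real.fourier_real_eq_integral_exp_smul, ← integral_conj]
  congr 1
  ext x
  rw [smul_eq_mul, map_mul, ← Complex.exp_conj, map_mul, Complex.conj_I, Complex.conj_ofReal]
  push_cast
  ring_nf

lemma cwt_lip {g : ℝ → ℝ} (hg : Differentiable ℝ g) {K : ℝ} (hK : 0 ≤ K)
    (hb : ∀ x, |deriv g x| ≤ K) (s t : ℝ) : |g s - g t| ≤ K * |s - t| := by
  have h := lipschitzWith_of_nnnorm_deriv_le hg (C := K.toNNReal) (fun x => by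
    rw [← NNReal.coe_le_coe, coe_nnnorm, Real.coe_toNNReal K hK]
    simpa using hb x)
  have := h.dist_le_mul s t
  rwa [Real.dist_eq, Real.dist_eq, Real.coe_toNNReal K hK] at this

lemma cwt_cos_lip (x y : ℝ) : |Real.cos x - Real.cos y| ≤ |x - y| := by
  have := cwt_lip Real.differentiable_cos (K := 1) zero_le_one (fun x => by
    rw [Real.deriv_cos]; simpa using Real.abs_sin_le_one x) x y
  simpa using this

lemma cwt_abs_int (b t : ℝ) : abs (∫ s in b..t, |s - b|) = (t - b) ^ 2 / 2 := by
  have h : (∫ s in b..t, |s - b|) = ∫ s in (0:ℝ)..(t - b), |s| := by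
    simpa using intervalIntegral.integral_comp_sub_right (fun s => |s|) b
  rw [h]
  rcases le_or_gt 0 (t - b) with hc | hc
  · rw [intervalIntegral.integral_congr (g := fun s => s) (by
      intro s hs
      rw [Set.uIcc_of_le hc] at hs
      exact abs_of_nonneg hs.1)]
    rw [integral_id, _root_.abs_of_nonneg (by nlinarith [sq_nonneg (t - b)])]
    ring
  · rw [intervalIntegral.integral_congr (g := fun s => -s) (by
      intro s hs
      rw [Set.uIcc_of_ge hc.le] at hs
      exact abs_of_nonpos hs.2)]
    rw [intervalIntegral.integral_neg, integral_id, abs_neg,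
      _root_.abs_of_nonneg (by nlinarith [sq_nonneg (t - b)])]
    ring

lemma cwt_taylor {φ : ℝ → ℝ} (hφ : ContDiff ℝ 2 φ) {K : ℝ} (hK : 0 ≤ K)
    (hφ'' : ∀ t, |deriv (deriv φ) t| ≤ K) (b t : ℝ) :
    |φ t - φ b - deriv φ b * (t - b)| ≤ K / 2 * (t - b) ^ 2 := by
  have hd1 : Differentiable ℝ φ := hφ.differentiable two_ne_zero
  have hd2 : Differentiable ℝ (deriv φ) := by
    have h := (contDiff_succ_iff_deriv.mp (by exact_mod_cast hφ : ContDiff ℝ (1 + 1) φ)).2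
    exact h.2.differentiable one_ne_zero
  have hcont : Continuous (deriv φ) := hd2.continuous
  have hlip : ∀ s : ℝ, |deriv φ s - deriv φ b| ≤ K * |s - b| := fun s =>
    cwt_lip hd2 hK hφ'' s b
  have hftc : φ t - φ b = ∫ s in b..t, deriv φ s :=
    (intervalIntegral.integral_deriv_eq_sub (fun x _ => hd1 x)
      (hcont.intervalIntegrable b t)).symm
  have hconst : deriv φ b * (t - b) = ∫ s in b..t, deriv φ b := by
    rw [intervalIntegral.integral_const, smul_eq_mul]; ring
  have hsub : φ t - φ b - deriv φ b * (t - b) = ∫ s in b..t, (deriv φ s - deriv φ b) := by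
    rw [hftc, hconst, intervalIntegral.integral_sub (hcont.intervalIntegrable b t)
      (intervalIntegrable_const)]
  rw [hsub]
  have key : ‖∫ s in b..t, (deriv φ s - deriv φ b)‖ ≤ abs (∫ s in b..t, K * |s - b|) := by
    apply intervalIntegral.norm_integral_le_abs_of_norm_le _ (by
      apply IntervalIntegrable.const_mul
      exact (continuous_abs.comp (continuous_id.sub continuous_const)).intervalIntegrable b t)
    exact Filter.Eventually.of_forall fun s => by simpa using hlip s
  calc |∫ s in b..t, (deriv φ s - deriv φ b)| ≤ abs (∫ s in b..t, K * |s - b|) := key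
    _ = K / 2 * (t - b) ^ 2 := by
        rw [intervalIntegral.integral_const_mul, abs_mul, _root_.abs_of_nonneg hK,
          cwt_abs_int b t]
        ring

end CwtHelpers

set_option maxHeartbeats 1000000 in
theorem stmt6 (ψ : SchwartzMap ℝ ℂ) (Δ : ℝ) (hΔ0 : 0 < Δ) (hΔ1 : Δ < 1)
    (hsupp : ∀ ξ : ℝ, ξ ∉ Set.Icc (1 - Δ) (1 + Δ) → FourierTransform.fourier (⇑ψ : ℝ → ℂ) ξ = 0)
    (ε c₁ M₂ : ℝ) (hε : 0 < ε) (hc₁ : 0 < c₁) (hc₁M₂ : c₁ ≤ M₂)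
    (A : ℝ → ℝ) (φ : ℝ → ℝ) (f : ℝ → ℂ)
    (hf : ∀ t : ℝ, f t = ((A t * Real.cos (2 * Real.pi * φ t) : ℝ) : ℂ))
    (hA : ContDiff ℝ 1 A) (hAbd : BddAbove (Set.range A)) (hApos : ∀ t : ℝ, 0 < A t)
    (hφ : ContDiff ℝ 2 φ)
    (hφ'lo : ∀ t : ℝ, c₁ ≤ deriv φ t) (hφ'hi : ∀ t : ℝ, deriv φ t ≤ M₂)
    (hA' : ∀ t : ℝ, |deriv A t| ≤ ε * deriv φ t)
    (hφ'' : ∀ t : ℝ, |deriv (deriv φ) t| ≤ ε * deriv φ t)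
    (I₁' I₂' Asup : ℝ)
    (hI₁' : I₁' = ∫ x : ℝ, |x| * ‖deriv (⇑ψ) x‖)
    (hI₂' : I₂' = ∫ x : ℝ, x ^ 2 * ‖deriv (⇑ψ) x‖)
    (hAsup : Asup = sSup (Set.range A)) :
    ∀ a : ℝ, 0 < a → ∀ b : ℝ,
      ∃ W' : ℂ, HasDerivAt (fun b' : ℝ => CWT (⇑ψ) f a b') W' b ∧
        ‖W' -
            Real.pi * Complex.I * (A b : ℂ) * ((deriv φ b : ℝ) : ℂ) *
              Complex.exp (2 * Real.pi * Complex.I * φ b) *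
              ((Real.sqrt a : ℝ) : ℂ) *
              (starRingEnd ℂ) (FourierTransform.fourier (⇑ψ : ℝ → ℂ) (a * deriv φ b))‖ ≤
          ε * M₂ * Real.sqrt a * (I₁' + Real.pi * Asup * a * I₂') := by
  intro a ha b
  have ha' : a ≠ 0 := ne_of_gt ha
  have hπ := Real.pi_pos
  have hM₂ : 0 < M₂ := lt_of_lt_of_le hc₁ hc₁M₂
  set lam := deriv φ b with hlam
  have hlam_pos : 0 < lam := lt_of_lt_of_le hc₁ (hφ'lo b)
  set ψd : ℝ → ℂ := deriv (⇑ψ) with hψd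
  have hψd_eq : ⇑(SchwartzMap.derivCLM ℝ ℂ ψ) = ψd :=
    funext fun x => SchwartzMap.derivCLM_apply ℝ ψ x
  have hψint : Integrable (⇑ψ) := ψ.integrable
  have hψdint : Integrable ψd := hψd_eq ▸ (SchwartzMap.derivCLM ℝ ℂ ψ).integrable
  have hψdcont : Continuous ψd := hψd_eq ▸ (SchwartzMap.derivCLM ℝ ℂ ψ).continuous
  have hx1 : Integrable (fun x : ℝ => |x| * ‖ψd x‖) := by
    have := (SchwartzMap.derivCLM ℝ ℂ ψ).integrable_pow_mul (volume : Measure ℝ) 1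
    simpa [hψd_eq] using this
  have hx2 : Integrable (fun x : ℝ => x ^ 2 * ‖ψd x‖) := by
    have := (SchwartzMap.derivCLM ℝ ℂ ψ).integrable_pow_mul (volume : Measure ℝ) 2
    simpa [hψd_eq, sq_abs] using this
  have hAle : ∀ t, A t ≤ Asup := fun t => hAsup ▸ le_csSup hAbd (Set.mem_range_self t)
  have hAsup_pos : 0 < Asup := lt_of_lt_of_le (hApos 0) (hAle 0)
  have hAcont := hA.continuous
  have hφcont := hφ.continuous
  have hfc : Continuous f := by
    have : Continuous fun t => ((A t * Real.cos (2 * Real.pi * φ t) : ℝ) : ℂ) :=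
      Complex.continuous_ofReal.comp (hAcont.mul (Real.continuous_cos.comp (by fun_prop)))
    exact this.congr fun t => (hf t).symm
  have hfbd : ∀ t, ‖f t‖ ≤ Asup := fun t => by
    rw [hf t, Complex.norm_real, Real.norm_eq_abs, abs_mul]
    calc |A t| * |Real.cos (2 * Real.pi * φ t)| ≤ |A t| * 1 :=
          mul_le_mul_of_nonneg_left (Real.abs_cos_le_one _) (abs_nonneg _)
      _ = A t := by rw [mul_one, abs_of_pos (hApos t)]
      _ ≤ Asup := hAle t
  have hA'bd : ∀ t, |deriv A t| ≤ ε * M₂ := fun t =>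
    (hA' t).trans (by nlinarith [hφ'hi t])
  have hφ''bd : ∀ t, |deriv (deriv φ) t| ≤ ε * M₂ := fun t =>
    (hφ'' t).trans (by nlinarith [hφ'hi t])
  -- decay bound for ψd
  obtain ⟨C₀, hC₀pos, hC₀⟩ := (SchwartzMap.derivCLM ℝ ℂ ψ).decay 0 0
  obtain ⟨C₂, hC₂pos, hC₂⟩ := (SchwartzMap.derivCLM ℝ ℂ ψ).decay 2 0
  set Cψ := C₀ + C₂ with hCψ
  have hCψ0 : 0 < Cψ := by positivity
  have hCb : ∀ x : ℝ, ‖ψd x‖ * (1 + x ^ 2) ≤ Cψ := fun x => by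
    have h0 := hC₀ x
    have h2 := hC₂ x
    rw [norm_iteratedFDeriv_zero, hψd_eq] at h0 h2
    simp only [Real.norm_eq_abs] at h0 h2
    nlinarith [sq_abs x, sq_nonneg x, norm_nonneg (ψd x)]
  -- the dominated-derivative step
  set F : ℝ → ℝ → ℂ := fun x t => f t * (starRingEnd ℂ) (ψ ((t - x) / a)) with hF
  set F' : ℝ → ℝ → ℂ :=
    fun x t => f t * ((-a⁻¹ : ℝ) • (starRingEnd ℂ) (ψd ((t - x) / a))) with hF'
  have hF_meas : ∀ᶠ x in nhds b, AEStronglyMeasurable (F x) volume := by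
    refine Filter.Eventually.of_forall fun x => ?_
    exact (hfc.mul (continuous_star.comp (ψ.continuous.comp
      ((continuous_id.sub continuous_const).div_const a)))).aestronglyMeasurable
  have hF_int : Integrable (F b) volume :=
    (cwt_conj_int (cwt_intg hψint b ha')).bdd_mul hfc.aestronglyMeasurable (Filter.Eventually.of_forall hfbd)
  have hF'_meas : AEStronglyMeasurable (F' b) volume := by
    apply Continuous.aestronglyMeasurable
    exact hfc.mul (((continuous_star.comp (hψdcont.comp
      ((continuous_id.sub continuous_const).div_const a)))).const_smul (-a⁻¹ : ℝ))
  set bound : ℝ → ℝ :=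
    fun t => Asup * a⁻¹ * (4 * Cψ) * (1 + ((t - b) / a) ^ 2)⁻¹ with hbound
  have h_bound : ∀ᵐ t : ℝ, ∀ x ∈ Metric.ball b a, ‖F' x t‖ ≤ bound t := by
    refine Filter.Eventually.of_forall fun t x hx => ?_
    set u := (t - b) / a with hu
    set v := (x - b) / a with hv
    have huv : (t - x) / a = u - v := by rw [hu, hv]; field_simp; ring
    have hv1 : |v| < 1 := by
      rw [hv, abs_div, abs_of_pos ha, div_lt_one ha]
      simpa [Real.dist_eq] using Metric.mem_ball.1 hx
    have hv2 : v ^ 2 < 1 := by nlinarith [abs_nonneg v, sq_abs v]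
    have hkey0 : ‖ψd (u - v)‖ * (1 + u ^ 2) ≤ 4 * Cψ := by
      have h4 : 1 + u ^ 2 ≤ 4 * (1 + (u - v) ^ 2) := by nlinarith [sq_nonneg (u - 2 * v)]
      nlinarith [hCb (u - v), norm_nonneg (ψd (u - v)),
        mul_le_mul_of_nonneg_left h4 (norm_nonneg (ψd (u - v)))]
    have hkey : ‖ψd (u - v)‖ ≤ 4 * Cψ * (1 + u ^ 2)⁻¹ := by
      rw [← le_div_iff₀ (by positivity : (0:ℝ) < 1 + u ^ 2)] at hkey0
      simpa [div_eq_mul_inv] using hkey0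
    calc ‖F' x t‖ = ‖f t‖ * (a⁻¹ * ‖ψd (u - v)‖) := by
          rw [hF']
          simp only [norm_mul, norm_smul, Real.norm_eq_abs, abs_neg,
            abs_of_pos (inv_pos.mpr ha), RCLike.norm_conj, huv]
      _ ≤ Asup * (a⁻¹ * (4 * Cψ * (1 + u ^ 2)⁻¹)) := by
          apply mul_le_mul (hfbd t) _ (by positivity) hAsup_pos.le
          exact mul_le_mul_of_nonneg_left hkey (by positivity)
      _ = bound t := by rw [hbound]; ring
  have bound_int : Integrable bound volume := by
    have : Integrable (fun t : ℝ => (1 + ((t - b) / a) ^ 2)⁻¹) :=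
      cwt_intg integrable_inv_one_add_sq b ha'
    simpa [hbound, mul_assoc] using this.const_mul (Asup * a⁻¹ * (4 * Cψ))
  have h_diff : ∀ᵐ t : ℝ, ∀ x ∈ Metric.ball b a, HasDerivAt (fun x => F x t) (F' x t) x := by
    refine Filter.Eventually.of_forall fun t x _ => ?_
    have hinner : HasDerivAt (fun x : ℝ => (t - x) / a) (-a⁻¹) x := by
      have h1 : HasDerivAt (fun x : ℝ => t - x) (-1) x := (hasDerivAt_id x).const_sub t
      simpa [neg_div, one_div] using h1.div_const a
    have hψc : HasDerivAt (fun x : ℝ => ψ ((t - x) / a))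
        ((-a⁻¹ : ℝ) • ψd ((t - x) / a)) x := by
      have := (ψ.differentiableAt.hasDerivAt).scomp x hinner
      simpa [hψd, Function.comp_def] using this
    have hstar : HasDerivAt (fun x : ℝ => (starRingEnd ℂ) (ψ ((t - x) / a)))
        ((-a⁻¹ : ℝ) • (starRingEnd ℂ) (ψd ((t - x) / a))) x := by
      have h := hψc.star
      have heq : star ((-a⁻¹ : ℝ) • ψd ((t - x) / a))
          = (-a⁻¹ : ℝ) • (starRingEnd ℂ) (ψd ((t - x) / a)) := by
        rw [star_smul, starRingEnd_apply]
        norm_num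
      rw [← heq]
      exact h
    exact hstar.const_mul (f t)
  obtain ⟨-, hder⟩ := hasDerivAt_integral_of_dominated_loc_of_deriv_le (Metric.ball_mem_nhds b ha) hF_meas hF_int
    hF'_meas h_bound bound_int h_diff
  have hW : HasDerivAt (fun b' : ℝ => CWT (⇑ψ) f a b')
      (((Real.sqrt a : ℝ) : ℂ)⁻¹ * ∫ t : ℝ, F' b t) b := by
    have h := hder.const_mul (((Real.sqrt a : ℝ) : ℂ)⁻¹)
    unfold CWT
    exact h
  refine ⟨_, hW, ?_⟩
  -- now the estimate
  set c : ℂ := (((Real.sqrt a : ℝ) : ℂ))⁻¹ with hc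
  set K : ℝ → ℂ := fun t => (starRingEnd ℂ) (ψd ((t - b) / a)) with hK
  have hKint : Integrable K := cwt_conj_int (cwt_intg hψdint b ha')
  have hfK : Integrable (fun t => f t * K t) :=
    hKint.bdd_mul hfc.aestronglyMeasurable (Filter.Eventually.of_forall hfbd)
  set f₀ : ℝ → ℂ :=
    fun t => ((A b * Real.cos (2 * Real.pi * (φ b + lam * (t - b))) : ℝ) : ℂ) with hf₀
  have hf₀c : Continuous f₀ := by
    apply Complex.continuous_ofReal.comp
    fun_prop
  have hf₀bd : ∀ t, ‖f₀ t‖ ≤ Asup := fun t => by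
    rw [hf₀]
    simp only [Complex.norm_real, Real.norm_eq_abs, abs_mul]
    calc |A b| * |Real.cos (2 * Real.pi * (φ b + lam * (t - b)))| ≤ |A b| * 1 :=
          mul_le_mul_of_nonneg_left (Real.abs_cos_le_one _) (abs_nonneg _)
      _ = A b := by rw [mul_one, abs_of_pos (hApos b)]
      _ ≤ Asup := hAle b
  have hf₀K : Integrable (fun t => f₀ t * K t) :=
    hKint.bdd_mul hf₀c.aestronglyMeasurable (Filter.Eventually.of_forall hf₀bd)
  have hD : (∫ t : ℝ, F' b t) = (-a⁻¹ : ℝ) • ∫ t : ℝ, f t * K t := by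
    rw [← integral_smul]
    congr 1
    funext t
    simp only [hF', hK, mul_smul_comm]
  -- the Fourier computation
  have hexp_int : ∀ cc : ℝ, Integrable (fun x : ℝ =>
      Complex.exp (((2 * Real.pi * cc * x : ℝ) : ℂ) * Complex.I) * (starRingEnd ℂ) (ψd x)) := by
    intro cc
    refine (cwt_conj_int hψdint).bdd_mul (c := 1) ?_ (Filter.Eventually.of_forall fun x => ?_)
    · exact (Complex.continuous_exp.comp (by fun_prop)).aestronglyMeasurable
    · rw [Complex.norm_exp_ofReal_mul_I]
  have hgpt : ∀ x : ℝ, ((A b * Real.cos (2 * Real.pi * (φ b + lam * (a * x))) : ℝ) : ℂ)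
        * (starRingEnd ℂ) (ψd x)
      = (A b : ℂ) / 2 * (Complex.exp (((2 * Real.pi * φ b : ℝ) : ℂ) * Complex.I)
          * (Complex.exp (((2 * Real.pi * (a * lam) * x : ℝ) : ℂ) * Complex.I)
              * (starRingEnd ℂ) (ψd x))
        + Complex.exp (((-(2 * Real.pi * φ b) : ℝ) : ℂ) * Complex.I)
          * (Complex.exp (((2 * Real.pi * (-(a * lam)) * x : ℝ) : ℂ) * Complex.I)
              * (starRingEnd ℂ) (ψd x))) := by
    intro x
    have hcos : ((Real.cos (2 * Real.pi * (φ b + lam * (a * x))) : ℝ) : ℂ)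
        = (Complex.exp (((2 * Real.pi * (φ b + lam * (a * x)) : ℝ) : ℂ) * Complex.I)
           + Complex.exp (-(((2 * Real.pi * (φ b + lam * (a * x)) : ℝ) : ℂ) * Complex.I))) / 2 := by
      rw [Complex.ofReal_cos, eq_div_iff (two_ne_zero' ℂ), mul_comm, Complex.two_cos, neg_mul]
    have e1 : Complex.exp (((2 * Real.pi * (φ b + lam * (a * x)) : ℝ) : ℂ) * Complex.I)
        = Complex.exp (((2 * Real.pi * φ b : ℝ) : ℂ) * Complex.I)
          * Complex.exp (((2 * Real.pi * (a * lam) * x : ℝ) : ℂ) * Complex.I) := by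
      rw [← Complex.exp_add]
      congr 1
      push_cast
      ring
    have e2 : Complex.exp (-(((2 * Real.pi * (φ b + lam * (a * x)) : ℝ) : ℂ) * Complex.I))
        = Complex.exp (((-(2 * Real.pi * φ b) : ℝ) : ℂ) * Complex.I)
          * Complex.exp (((2 * Real.pi * (-(a * lam)) * x : ℝ) : ℂ) * Complex.I) := by
      rw [← Complex.exp_add]
      congr 1
      push_cast
      ring
    calc ((A b * Real.cos (2 * Real.pi * (φ b + lam * (a * x))) : ℝ) : ℂ) * (starRingEnd ℂ) (ψd x)
        = (A b : ℂ) * ((Real.cos (2 * Real.pi * (φ b + lam * (a * x))) : ℝ) : ℂ)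
            * (starRingEnd ℂ) (ψd x) := by push_cast; ring
      _ = _ := by rw [hcos, e1, e2]; ring
  have hsplit : (∫ x : ℝ, ((A b * Real.cos (2 * Real.pi * (φ b + lam * (a * x))) : ℝ) : ℂ)
        * (starRingEnd ℂ) (ψd x))
      = (A b : ℂ) / 2 * (Complex.exp (((2 * Real.pi * φ b : ℝ) : ℂ) * Complex.I)
          * (starRingEnd ℂ) (FourierTransform.fourier ψd (a * lam))
        + Complex.exp (((-(2 * Real.pi * φ b) : ℝ) : ℂ) * Complex.I)
          * (starRingEnd ℂ) (FourierTransform.fourier ψd (-(a * lam)))) := by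
    rw [← cwt_conj_fourier ψd (a * lam), ← cwt_conj_fourier ψd (-(a * lam))]
    simp_rw [hgpt]
    rw [integral_const_mul, integral_add ((hexp_int (a * lam)).const_mul _)
      ((hexp_int (-(a * lam))).const_mul _), integral_const_mul, integral_const_mul]
  have hFd : FourierTransform.fourier ψd
      = fun ξ : ℝ => (2 * (Real.pi : ℂ) * Complex.I * (ξ : ℂ)) • FourierTransform.fourier (⇑ψ) ξ := by
    rw [hψd]
    exact Real.fourier_deriv hψint ψ.differentiable (hψd ▸ hψdint)
  have hneg : FourierTransform.fourier (⇑ψ) (-(a * lam)) = 0 := by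
    apply hsupp
    intro hmem
    rw [Set.mem_Icc] at hmem
    nlinarith [mul_pos ha hlam_pos, hmem.1]
  have hnegd : (starRingEnd ℂ) (FourierTransform.fourier ψd (-(a * lam))) = 0 := by
    rw [hFd]
    simp [hneg]
  have hposd : (starRingEnd ℂ) (FourierTransform.fourier ψd (a * lam))
      = -(2 * (Real.pi : ℂ) * Complex.I * ((a * lam : ℝ) : ℂ))
          * (starRingEnd ℂ) (FourierTransform.fourier (⇑ψ) (a * lam)) := by
    rw [hFd]
    simp only [smul_eq_mul, map_mul, Complex.conj_I, Complex.conj_ofReal, map_ofNat]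
    ring
  have hJ : (∫ t : ℝ, f₀ t * K t)
      = a • ((A b : ℂ) / 2 * (Complex.exp (((2 * Real.pi * φ b : ℝ) : ℂ) * Complex.I)
          * (starRingEnd ℂ) (FourierTransform.fourier ψd (a * lam)))) := by
    have hrep : (fun t : ℝ => f₀ t * K t) = fun t : ℝ =>
        (fun x : ℝ => ((A b * Real.cos (2 * Real.pi * (φ b + lam * (a * x))) : ℝ) : ℂ)
          * (starRingEnd ℂ) (ψd x)) ((t - b) / a) := by
      funext t
      have harg : a * ((t - b) / a) = t - b := by field_simp
      simp only [hf₀, hK, harg]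
    have hcov := cwt_cov (fun x : ℝ =>
      ((A b * Real.cos (2 * Real.pi * (φ b + lam * (a * x))) : ℝ) : ℂ)
        * (starRingEnd ℂ) (ψd x)) b ha
    rw [hrep, hcov, hsplit, hnegd, mul_zero, add_zero]
  have hsqrt_pos : 0 < Real.sqrt a := Real.sqrt_pos.mpr ha
  have hsqrt_ne : ((Real.sqrt a : ℝ) : ℂ) ≠ 0 := by
    exact_mod_cast ne_of_gt hsqrt_pos
  have haC : ((a : ℝ) : ℂ) = ((Real.sqrt a : ℝ) : ℂ) * ((Real.sqrt a : ℝ) : ℂ) := by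
    rw [← Complex.ofReal_mul, Real.mul_self_sqrt ha.le]
  have hMeq : (Real.pi : ℂ) * Complex.I * (A b : ℂ) * ((lam : ℝ) : ℂ)
        * Complex.exp (2 * (Real.pi : ℂ) * Complex.I * ((φ b : ℝ) : ℂ))
        * ((Real.sqrt a : ℝ) : ℂ)
        * (starRingEnd ℂ) (FourierTransform.fourier (⇑ψ) (a * lam))
      = c * ((-a⁻¹ : ℝ) • ∫ t : ℝ, f₀ t * K t) := by
    rw [hJ, hposd]
    have hexp2 : Complex.exp (((2 * Real.pi * φ b : ℝ) : ℂ) * Complex.I)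
        = Complex.exp (2 * (Real.pi : ℂ) * Complex.I * ((φ b : ℝ) : ℂ)) := by
      congr 1
      push_cast
      ring
    rw [hexp2, hc, smul_smul]
    rw [show (-a⁻¹ * a : ℝ) = -1 by field_simp, neg_one_smul]
    push_cast
    rw [haC]
    field_simp
  have hsubfun : (fun t : ℝ => (f t - f₀ t) * K t) = fun t => f t * K t - f₀ t * K t :=
    funext fun t => sub_mul _ _ _
  have hWM : (c * ∫ t : ℝ, F' b t)
        - (Real.pi : ℂ) * Complex.I * (A b : ℂ) * ((lam : ℝ) : ℂ)
          * Complex.exp (2 * (Real.pi : ℂ) * Complex.I * ((φ b : ℝ) : ℂ))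
          * ((Real.sqrt a : ℝ) : ℂ)
          * (starRingEnd ℂ) (FourierTransform.fourier (⇑ψ) (a * lam))
      = c * ((-a⁻¹ : ℝ) • ∫ t : ℝ, (f t - f₀ t) * K t) := by
    rw [hD, hMeq, hsubfun, integral_sub hfK hf₀K, smul_sub, mul_sub]
  rw [hWM]
  have hnorm : ‖c * ((-a⁻¹ : ℝ) • ∫ t : ℝ, (f t - f₀ t) * K t)‖
      = (Real.sqrt a)⁻¹ * (a⁻¹ * ‖∫ t : ℝ, (f t - f₀ t) * K t‖) := by
    rw [norm_mul, norm_smul, hc, norm_inv, Complex.norm_real, Real.norm_eq_abs,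
      abs_of_nonneg (Real.sqrt_nonneg a), Real.norm_eq_abs, abs_neg,
      abs_of_pos (inv_pos.mpr ha)]
  rw [hnorm]
  -- pointwise bound
  have hAdiff : Differentiable ℝ A := hA.differentiable one_ne_zero
  have hptw : ∀ t : ℝ, ‖f t - f₀ t‖ ≤ ε * M₂ * (|t - b| + Real.pi * Asup * (t - b) ^ 2) := by
    intro t
    rw [hf t, hf₀]
    rw [← Complex.ofReal_sub, Complex.norm_real, Real.norm_eq_abs]
    have e1 : |A t - A b| ≤ ε * M₂ * |t - b| := cwt_lip hAdiff (by positivity) hA'bd t b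
    have e2 : |φ t - φ b - lam * (t - b)| ≤ ε * M₂ / 2 * (t - b) ^ 2 := by
      have := cwt_taylor hφ (by positivity : (0:ℝ) ≤ ε * M₂) hφ''bd b t
      simpa [hlam] using this
    have e4 : |Real.cos (2 * Real.pi * φ t) - Real.cos (2 * Real.pi * (φ b + lam * (t - b)))|
        ≤ Real.pi * ε * M₂ * (t - b) ^ 2 := by
      calc |Real.cos (2 * Real.pi * φ t) - Real.cos (2 * Real.pi * (φ b + lam * (t - b)))|
          ≤ |2 * Real.pi * φ t - 2 * Real.pi * (φ b + lam * (t - b))| := cwt_cos_lip _ _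
        _ = 2 * Real.pi * |φ t - φ b - lam * (t - b)| := by
            rw [show 2 * Real.pi * φ t - 2 * Real.pi * (φ b + lam * (t - b))
              = 2 * Real.pi * (φ t - φ b - lam * (t - b)) by ring, abs_mul,
              abs_of_pos (by positivity : (0:ℝ) < 2 * Real.pi)]
        _ ≤ 2 * Real.pi * (ε * M₂ / 2 * (t - b) ^ 2) :=
            mul_le_mul_of_nonneg_left e2 (by positivity)
        _ = Real.pi * ε * M₂ * (t - b) ^ 2 := by ring
    have hsplit2 : A t * Real.cos (2 * Real.pi * φ t)
          - A b * Real.cos (2 * Real.pi * (φ b + lam * (t - b)))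
        = (A t - A b) * Real.cos (2 * Real.pi * φ t)
          + A b * (Real.cos (2 * Real.pi * φ t)
            - Real.cos (2 * Real.pi * (φ b + lam * (t - b)))) := by ring
    rw [hsplit2]
    have s1 : |(A t - A b) * Real.cos (2 * Real.pi * φ t)| ≤ ε * M₂ * |t - b| := by
      rw [abs_mul]
      calc |A t - A b| * |Real.cos (2 * Real.pi * φ t)| ≤ |A t - A b| * 1 :=
            mul_le_mul_of_nonneg_left (Real.abs_cos_le_one _) (abs_nonneg _)
        _ = |A t - A b| := mul_one _
        _ ≤ ε * M₂ * |t - b| := e1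
    have s2 : |A b * (Real.cos (2 * Real.pi * φ t)
          - Real.cos (2 * Real.pi * (φ b + lam * (t - b))))|
        ≤ Asup * (Real.pi * ε * M₂ * (t - b) ^ 2) := by
      rw [abs_mul]
      apply mul_le_mul _ e4 (abs_nonneg _) hAsup_pos.le
      rw [abs_of_pos (hApos b)]
      exact hAle b
    calc |(A t - A b) * Real.cos (2 * Real.pi * φ t)
          + A b * (Real.cos (2 * Real.pi * φ t)
            - Real.cos (2 * Real.pi * (φ b + lam * (t - b))))|
        ≤ |(A t - A b) * Real.cos (2 * Real.pi * φ t)|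
          + |A b * (Real.cos (2 * Real.pi * φ t)
            - Real.cos (2 * Real.pi * (φ b + lam * (t - b))))| := abs_add_le _ _
      _ ≤ ε * M₂ * |t - b| + Asup * (Real.pi * ε * M₂ * (t - b) ^ 2) := add_le_add s1 s2
      _ = ε * M₂ * (|t - b| + Real.pi * Asup * (t - b) ^ 2) := by ring
  -- integrability of the bound and its value
  have hg2rw : (fun x : ℝ => ε * M₂ * (a * |x| + Real.pi * Asup * (a ^ 2 * x ^ 2)) * ‖ψd x‖)
      = fun x : ℝ => (ε * M₂ * a) * (|x| * ‖ψd x‖)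
        + (ε * M₂ * Real.pi * Asup * a ^ 2) * (x ^ 2 * ‖ψd x‖) := by
    funext x
    ring
  have hg2int : Integrable
      (fun x : ℝ => ε * M₂ * (a * |x| + Real.pi * Asup * (a ^ 2 * x ^ 2)) * ‖ψd x‖) := by
    rw [hg2rw]
    exact (hx1.const_mul _).add (hx2.const_mul _)
  have hb2rep : (fun t : ℝ => ε * M₂ * (|t - b| + Real.pi * Asup * (t - b) ^ 2)
        * ‖ψd ((t - b) / a)‖)
      = fun t : ℝ => (fun x : ℝ => ε * M₂ * (a * |x| + Real.pi * Asup * (a ^ 2 * x ^ 2))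
          * ‖ψd x‖) ((t - b) / a) := by
    funext t
    have h1 : a * |(t - b) / a| = |t - b| := by
      rw [abs_div, abs_of_pos ha]
      field_simp
    have h2 : a ^ 2 * ((t - b) / a) ^ 2 = (t - b) ^ 2 := by
      field_simp
    simp only [h1, h2]
  have hb2int : Integrable (fun t : ℝ =>
      ε * M₂ * (|t - b| + Real.pi * Asup * (t - b) ^ 2) * ‖ψd ((t - b) / a)‖) := by
    rw [hb2rep]
    exact cwt_intg hg2int b ha'
  have hb2val : (∫ t : ℝ, ε * M₂ * (|t - b| + Real.pi * Asup * (t - b) ^ 2)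
        * ‖ψd ((t - b) / a)‖)
      = a * (ε * M₂ * a * I₁' + ε * M₂ * Real.pi * Asup * a ^ 2 * I₂') := by
    have hcov2 := cwt_cov (fun x : ℝ => ε * M₂ * (a * |x| + Real.pi * Asup * (a ^ 2 * x ^ 2))
      * ‖ψd x‖) b ha
    rw [hb2rep, hcov2, smul_eq_mul]
    congr 1
    rw [hg2rw, integral_add (hx1.const_mul _) (hx2.const_mul _), integral_const_mul,
      integral_const_mul, ← hI₁', ← hI₂']
  have hsubint : Integrable (fun t : ℝ => (f t - f₀ t) * K t) := by
    rw [hsubfun]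
    exact hfK.sub hf₀K
  have hnormint : ‖∫ t : ℝ, (f t - f₀ t) * K t‖
      ≤ a * (ε * M₂ * a * I₁' + ε * M₂ * Real.pi * Asup * a ^ 2 * I₂') := by
    rw [← hb2val]
    refine (norm_integral_le_integral_norm _).trans ?_
    apply integral_mono hsubint.norm hb2int
    intro t
    show ‖(f t - f₀ t) * K t‖ ≤ ε * M₂ * (|t - b| + Real.pi * Asup * (t - b) ^ 2)
      * ‖ψd ((t - b) / a)‖
    have hKn : ‖(f t - f₀ t) * K t‖ = ‖f t - f₀ t‖ * ‖ψd ((t - b) / a)‖ := by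
      rw [norm_mul, hK, RCLike.norm_conj]
    rw [hKn]
    exact mul_le_mul_of_nonneg_right (hptw t) (norm_nonneg _)
  calc (Real.sqrt a)⁻¹ * (a⁻¹ * ‖∫ t : ℝ, (f t - f₀ t) * K t‖)
      ≤ (Real.sqrt a)⁻¹ * (a⁻¹
          * (a * (ε * M₂ * a * I₁' + ε * M₂ * Real.pi * Asup * a ^ 2 * I₂'))) := by
        apply mul_le_mul_of_nonneg_left _ (by positivity)
        exact mul_le_mul_of_nonneg_left hnormint (by positivity)
    _ = ε * M₂ * Real.sqrt a * (I₁' + Real.pi * Asup * a * I₂') := by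
        set s := Real.sqrt a with hs
        have hsne : s ≠ 0 := ne_of_gt hsqrt_pos
        rw [show a = s * s from (Real.mul_self_sqrt ha.le).symm]
        field_simp
end

section
/- Let ψ : ℝ → ℂ be a Schwartz function whose Fourier transform ψ̂ is supported in [1−Δ, 1+Δ] with 0 < Δ < 1, and set C_ψ = ∫_0^∞ conj(ψ̂(ξ))·ξ^{−1} dξ. Let f(t) = A(t)·cos(2πφ(t)) be an intrinsic-mode-type function with accuracy ε (parameters c₁, M₂). Then for every b ∈ ℝ, | ∫_{(1−Δ)/φ'(b)}^{(1+Δ)/φ'(b)} W_f(a,b)·a^{−3/2} da − (1/2)·C_ψ·A(b)·exp(2πiφ(b)) | ≤ ε·M₂·( 2Δ·I₁/c₁ + 2πΔ·‖A‖∞·I₂/c₁² ). That is, integrating the wavelet transform over the scale band around 1/φ'(b) recovers the analytic amplitude-phase representation of f up to an O(ε) error. -/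
open MeasureTheory
open Real Set

lemma deriv_bound_interval {g g' : ℝ → ℝ} (hder : ∀ x, HasDerivAt g (g' x) x)
    (hcont : Continuous g') {B : ℝ → ℝ} (hBcont : Continuous B)
    (b t : ℝ) (hbd : ∀ x ∈ Set.uIcc b t, |g' x| ≤ B x) :
    |g t - g b| ≤ |∫ s in b..t, B s| := by
  have hftc : g t - g b = ∫ s in b..t, g' s :=
    (intervalIntegral.integral_eq_sub_of_hasDerivAt (fun x _ => hder x)
      (hcont.intervalIntegrable b t)).symm
  rcases le_total b t with h | h
  · rw [hftc]
    calc |∫ s in b..t, g' s| ≤ ∫ s in b..t, |g' s| :=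
          intervalIntegral.abs_integral_le_integral_abs h
      _ ≤ ∫ s in b..t, B s :=
          intervalIntegral.integral_mono_on h (hcont.abs.intervalIntegrable b t)
            (hBcont.intervalIntegrable b t)
            (fun x hx => hbd x (by rwa [Set.uIcc_of_le h]))
      _ ≤ |∫ s in b..t, B s| := le_abs_self _
  · rw [hftc, intervalIntegral.integral_symm, abs_neg,
      intervalIntegral.integral_symm t b (f := B), abs_neg]
    calc |∫ s in t..b, g' s| ≤ ∫ s in t..b, |g' s| :=
          intervalIntegral.abs_integral_le_integral_abs h
      _ ≤ ∫ s in t..b, B s :=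
          intervalIntegral.integral_mono_on h (hcont.abs.intervalIntegrable t b)
            (hBcont.intervalIntegrable t b)
            (fun x hx => hbd x (by rwa [Set.uIcc_of_ge h]))
      _ ≤ |∫ s in t..b, B s| := le_abs_self _

lemma lipschitz_of_deriv_bound {g g' : ℝ → ℝ} (hder : ∀ x, HasDerivAt g (g' x) x)
    (hcont : Continuous g') {K : ℝ} (hK : 0 ≤ K) (hbd : ∀ x, |g' x| ≤ K) (b t : ℝ) :
    |g t - g b| ≤ K * |t - b| := by
  have := deriv_bound_interval hder hcont (B := fun _ => K) continuous_const b t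
    (fun x _ => hbd x)
  simpa [intervalIntegral.integral_const, smul_eq_mul, abs_mul, abs_of_nonneg hK,
    mul_comm] using this

lemma quad_of_deriv_bound {g g' : ℝ → ℝ} (hder : ∀ x, HasDerivAt g (g' x) x)
    (hcont : Continuous g') {K : ℝ} (hK : 0 ≤ K) (b : ℝ)
    (hbd : ∀ x, |g' x| ≤ K * |x - b|) (t : ℝ) :
    |g t - g b| ≤ K * (t - b) ^ 2 / 2 := by
  have := deriv_bound_interval hder hcont (B := fun s => K * |s - b|)
    (continuous_const.mul (continuous_abs.comp (continuous_id.sub continuous_const))) b t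
    (fun x _ => hbd x)
  refine this.trans ?_
  have h1 : (∫ s in b..t, K * |s - b|) = K * ∫ s in b..t, |s - b| := by
    rw [intervalIntegral.integral_const_mul]
  have h2 : (∫ s in b..t, |s - b|) = ∫ u in (0:ℝ)..(t - b), |u| := by
    simpa using intervalIntegral.integral_comp_sub_right (fun u => |u|) b
  rcases le_total b t with h | h
  · have h3 : (∫ u in (0:ℝ)..(t-b), |u|) = (t - b)^2 / 2 := by
      rw [intervalIntegral.integral_congr (g := fun u => u)
        (fun u hu => by
          rw [Set.uIcc_of_le (by linarith : (0:ℝ) ≤ t - b)] at hu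
          exact abs_of_nonneg hu.1),
        integral_id]
      ring
    rw [h1, h2, h3, abs_of_nonneg (by positivity), mul_div_assoc]
  · have h3 : (∫ u in (0:ℝ)..(t-b), |u|) = -((t - b)^2 / 2) := by
      rw [intervalIntegral.integral_congr (g := fun u => -u)
        (fun u hu => by
          rw [Set.uIcc_of_ge (by linarith : t - b ≤ (0:ℝ))] at hu
          exact abs_of_nonpos hu.2),
        intervalIntegral.integral_neg, integral_id]
      ring
    rw [h1, h2, h3, abs_mul, abs_of_nonneg hK, abs_neg, abs_of_nonneg (by positivity),
      mul_div_assoc]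

lemma conj_integrable (ψ : SchwartzMap ℝ ℂ) :
    Integrable (fun x : ℝ => (starRingEnd ℂ) (ψ x)) :=
  (Complex.conjCLE.toContinuousLinearMap).integrable_comp ψ.integrable

lemma exp_mul_conj_integrable (ψ : SchwartzMap ℝ ℂ) (c : ℝ) :
    Integrable (fun x : ℝ => Complex.exp (((c * x : ℝ) : ℂ) * Complex.I) *
      (starRingEnd ℂ) (ψ x)) := by
  refine (conj_integrable ψ).bdd_mul (c := 1) ?_ (Filter.Eventually.of_forall fun x => ?_)
  · exact (Complex.continuous_exp.comp (by continuity)).aestronglyMeasurable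
  · rw [Complex.norm_exp_ofReal_mul_I]

lemma key_fourier (ψ : SchwartzMap ℝ ℂ) (w : ℝ) :
    ∫ x : ℝ, Complex.exp (((2 * π * w * x : ℝ) : ℂ) * Complex.I) * (starRingEnd ℂ) (ψ x)
      = (starRingEnd ℂ) (FourierTransform.fourier (⇑ψ : ℝ → ℂ) w) := by
  rw [Real.fourier_real_eq_integral_exp_smul, ← integral_conj]
  congr 1
  ext x
  rw [smul_eq_mul, map_mul, ← Complex.exp_conj]
  congr 2
  simp [Complex.conj_I, Complex.conj_ofReal, map_ofNat]
  ring

lemma cos_integral (ψ : SchwartzMap ℝ ℂ) {Δ : ℝ} (hΔ1 : Δ < 1)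
    (hsupp : ∀ ξ : ℝ, ξ ∉ Set.Icc (1 - Δ) (1 + Δ) → FourierTransform.fourier (⇑ψ : ℝ → ℂ) ξ = 0)
    (θ w : ℝ) (hw : 0 < w) :
    ∫ x : ℝ, ((Real.cos (2 * π * (θ + w * x)) : ℝ) : ℂ) * (starRingEnd ℂ) (ψ x)
      = (1 / 2 : ℂ) * Complex.exp (((2 * π * θ : ℝ) : ℂ) * Complex.I) *
        (starRingEnd ℂ) (FourierTransform.fourier (⇑ψ : ℝ → ℂ) w) := by
  have hptw : ∀ x : ℝ, ((Real.cos (2 * π * (θ + w * x)) : ℝ) : ℂ) * (starRingEnd ℂ) (ψ x)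
      = (1 / 2 : ℂ) * (Complex.exp (((2 * π * θ : ℝ) : ℂ) * Complex.I) *
          (Complex.exp (((2 * π * w * x : ℝ) : ℂ) * Complex.I) * (starRingEnd ℂ) (ψ x))) +
        (1 / 2 : ℂ) * (Complex.exp (((2 * π * (-θ) : ℝ) : ℂ) * Complex.I) *
          (Complex.exp (((2 * π * (-w) * x : ℝ) : ℂ) * Complex.I) * (starRingEnd ℂ) (ψ x))) := by
    intro x
    have e1 : ((2 * π * (θ + w * x) : ℝ) : ℂ) * Complex.I
        = ((2 * π * θ : ℝ) : ℂ) * Complex.I + ((2 * π * w * x : ℝ) : ℂ) * Complex.I := by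
      push_cast; ring
    have e2 : -((2 * π * (θ + w * x) : ℝ) : ℂ) * Complex.I
        = ((2 * π * (-θ) : ℝ) : ℂ) * Complex.I + ((2 * π * (-w) * x : ℝ) : ℂ) * Complex.I := by
      push_cast; ring
    rw [Complex.ofReal_cos, Complex.cos, e1, e2, Complex.exp_add, Complex.exp_add]
    ring
  calc ∫ x : ℝ, ((Real.cos (2 * π * (θ + w * x)) : ℝ) : ℂ) * (starRingEnd ℂ) (ψ x)
      = ∫ x : ℝ, ((1 / 2 : ℂ) * (Complex.exp (((2 * π * θ : ℝ) : ℂ) * Complex.I) *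
          (Complex.exp (((2 * π * w * x : ℝ) : ℂ) * Complex.I) * (starRingEnd ℂ) (ψ x))) +
        (1 / 2 : ℂ) * (Complex.exp (((2 * π * (-θ) : ℝ) : ℂ) * Complex.I) *
          (Complex.exp (((2 * π * (-w) * x : ℝ) : ℂ) * Complex.I) * (starRingEnd ℂ) (ψ x)))) :=
        integral_congr_ae (Filter.Eventually.of_forall hptw)
    _ = (1 / 2 : ℂ) * (Complex.exp (((2 * π * θ : ℝ) : ℂ) * Complex.I) *
          ∫ x : ℝ, Complex.exp (((2 * π * w * x : ℝ) : ℂ) * Complex.I) * (starRingEnd ℂ) (ψ x)) +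
        (1 / 2 : ℂ) * (Complex.exp (((2 * π * (-θ) : ℝ) : ℂ) * Complex.I) *
          ∫ x : ℝ, Complex.exp (((2 * π * (-w) * x : ℝ) : ℂ) * Complex.I) *
            (starRingEnd ℂ) (ψ x)) := by
        rw [integral_add, integral_const_mul, integral_const_mul, integral_const_mul,
          integral_const_mul]
        · exact ((exp_mul_conj_integrable ψ (2 * π * w)).const_mul _).const_mul _
        · exact ((exp_mul_conj_integrable ψ (2 * π * (-w))).const_mul _).const_mul _
    _ = (1 / 2 : ℂ) * Complex.exp (((2 * π * θ : ℝ) : ℂ) * Complex.I) *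
        (starRingEnd ℂ) (FourierTransform.fourier (⇑ψ : ℝ → ℂ) w) := by
        rw [key_fourier ψ w, key_fourier ψ (-w), hsupp (-w) (by
          intro h
          simp only [Set.mem_Icc] at h
          linarith [h.1]), map_zero, mul_zero, mul_zero, add_zero]
        ring

lemma integral_scale (h : ℝ → ℂ) (a b : ℝ) :
    ∫ x : ℝ, h (b + a * x) = |a⁻¹| • ∫ t : ℝ, h t := by
  have e : (fun x : ℝ => h (b + a * x)) = fun x : ℝ => (fun y => h (y + b)) (a * x) := by
    ext x; simp [add_comm]
  rw [e, Measure.integral_comp_mul_left (fun y => h (y + b)) a, integral_add_right_eq_self]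

lemma integral_scale' (h : ℝ → ℂ) {a : ℝ} (b : ℝ) (ha : a ≠ 0) :
    ∫ t : ℝ, h t = |a| • ∫ x : ℝ, h (b + a * x) := by
  rw [integral_scale h a b, smul_smul, abs_inv, mul_inv_cancel₀ (abs_ne_zero.mpr ha), one_smul]

set_option maxHeartbeats 1000000 in
theorem stmt9 (ψ : SchwartzMap ℝ ℂ) (Δ : ℝ) (hΔ0 : 0 < Δ) (hΔ1 : Δ < 1)
    (hsupp : ∀ ξ : ℝ, ξ ∉ Set.Icc (1 - Δ) (1 + Δ) → FourierTransform.fourier (⇑ψ : ℝ → ℂ) ξ = 0)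
    (Cψ : ℂ)
    (hCψ : Cψ = ∫ ξ in Set.Ioi (0 : ℝ),
      (starRingEnd ℂ) (FourierTransform.fourier (⇑ψ : ℝ → ℂ) ξ) * ((ξ : ℝ) : ℂ)⁻¹)
    (ε c₁ M₂ : ℝ) (hε : 0 < ε) (hc₁ : 0 < c₁) (hc₁M₂ : c₁ ≤ M₂)
    (A : ℝ → ℝ) (φ : ℝ → ℝ) (f : ℝ → ℂ)
    (hf : ∀ t : ℝ, f t = ((A t * Real.cos (2 * Real.pi * φ t) : ℝ) : ℂ))
    (hA : ContDiff ℝ 1 A) (hAbd : BddAbove (Set.range A)) (hApos : ∀ t : ℝ, 0 < A t)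
    (hφ : ContDiff ℝ 2 φ)
    (hφ'lo : ∀ t : ℝ, c₁ ≤ deriv φ t) (hφ'hi : ∀ t : ℝ, deriv φ t ≤ M₂)
    (hA' : ∀ t : ℝ, |deriv A t| ≤ ε * deriv φ t)
    (hφ'' : ∀ t : ℝ, |deriv (deriv φ) t| ≤ ε * deriv φ t)
    (I₁ I₂ Asup : ℝ)
    (hI₁ : I₁ = ∫ x : ℝ, |x| * ‖ψ x‖) (hI₂ : I₂ = ∫ x : ℝ, x ^ 2 * ‖ψ x‖)
    (hAsup : Asup = sSup (Set.range A)) :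
    ∀ b : ℝ,
      ‖(∫ a in Set.Icc ((1 - Δ) / deriv φ b) ((1 + Δ) / deriv φ b),
            CWT (⇑ψ) f a b * ((Real.sqrt a ^ 3 : ℝ) : ℂ)⁻¹) -
          (1 / 2 : ℂ) * Cψ * (A b : ℂ) * Complex.exp (2 * Real.pi * Complex.I * φ b)‖ ≤
        ε * M₂ * (2 * Δ * I₁ / c₁ + 2 * Real.pi * Δ * Asup * I₂ / c₁ ^ 2) := by
  intro b
  have hM₂ : 0 < M₂ := lt_of_lt_of_le hc₁ hc₁M₂
  set η := deriv φ b with hηdef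
  have hη1 : c₁ ≤ η := hφ'lo b
  have hηpos : 0 < η := lt_of_lt_of_le hc₁ hη1
  have hη2 : η ≤ M₂ := hφ'hi b
  set l := (1 - Δ) / η with hldef
  set u := (1 + Δ) / η with hudef
  have hlpos : 0 < l := div_pos (by linarith) hηpos
  have hlu : l ≤ u := by
    rw [hldef, hudef, div_le_div_iff₀ hηpos hηpos]
    nlinarith
  have hIccpos : ∀ a ∈ Set.Icc l u, 0 < a := fun a ha => lt_of_lt_of_le hlpos ha.1
  -- smoothness facts
  have hφdiff : Differentiable ℝ φ := hφ.differentiable (by norm_num)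
  have h2 : ContDiff ℝ (1 + 1) φ := by exact_mod_cast hφ
  have hφ'C1 : ContDiff ℝ 1 (deriv φ) := (contDiff_succ_iff_deriv.mp h2).2.2
  have hφ'diff : Differentiable ℝ (deriv φ) := hφ'C1.differentiable one_ne_zero
  have hφ'cont : Continuous (deriv φ) := hφ'diff.continuous
  have hφ''cont : Continuous (deriv (deriv φ)) := (contDiff_one_iff_deriv.mp hφ'C1).2
  have hAdiff : Differentiable ℝ A := hA.differentiable one_ne_zero
  have hA'cont : Continuous (deriv A) := (contDiff_one_iff_deriv.mp hA).2
  have hεM₂ : 0 ≤ ε * M₂ := by positivity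
  have hAle : ∀ t, A t ≤ Asup := fun t => hAsup ▸ le_csSup hAbd ⟨t, rfl⟩
  have hAsup0 : 0 ≤ Asup := (hApos 0).le.trans (hAle 0)
  -- Lipschitz/Taylor bounds
  have hAlip : ∀ t, |A t - A b| ≤ ε * M₂ * |t - b| := fun t =>
    lipschitz_of_deriv_bound (fun x => (hAdiff x).hasDerivAt) hA'cont hεM₂
      (fun x => (hA' x).trans (mul_le_mul_of_nonneg_left (hφ'hi x) hε.le)) b t
  have hφ'lip : ∀ s, |deriv φ s - η| ≤ ε * M₂ * |s - b| := fun s =>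
    lipschitz_of_deriv_bound (fun x => (hφ'diff x).hasDerivAt) hφ''cont hεM₂
      (fun x => (hφ'' x).trans (mul_le_mul_of_nonneg_left (hφ'hi x) hε.le)) b s
  have hTq : ∀ t, |φ t - φ b - η * (t - b)| ≤ ε * M₂ * (t - b) ^ 2 / 2 := by
    intro t
    have hder : ∀ x : ℝ, HasDerivAt (fun s => φ s - η * s) (deriv φ x - η) x := by
      intro x
      have h := ((hφdiff x).hasDerivAt.sub ((hasDerivAt_id x).const_mul η))
      simp only [id, mul_one] at h
      exact h
    have h := quad_of_deriv_bound hder (hφ'cont.sub continuous_const) hεM₂ b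
      (fun x => hφ'lip x) t
    have e : φ t - φ b - η * (t - b) = (φ t - η * t) - (φ b - η * b) := by ring
    rw [e]
    exact h
  have hcosl : ∀ X Y : ℝ, |Real.cos X - Real.cos Y| ≤ |X - Y| := by
    intro X Y
    have h := lipschitz_of_deriv_bound (g := Real.cos) (g' := fun x => -Real.sin x)
      (fun x => Real.hasDerivAt_cos x) (by continuity) (K := 1) zero_le_one
      (fun x => by rw [abs_neg]; exact Real.abs_sin_le_one x) Y X
    simpa using h
  -- the comparison function and pointwise estimate
  set ft : ℝ → ℂ := fun t => ((A b * Real.cos (2 * π * (φ b + η * (t - b))) : ℝ) : ℂ) with hftdef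
  have hdiff_bd : ∀ t, ‖f t - ft t‖
      ≤ ε * M₂ * |t - b| + π * (ε * M₂) * Asup * (t - b) ^ 2 := by
    intro t
    rw [hf t, hftdef]
    have ecast : ((A t * Real.cos (2 * π * φ t) : ℝ) : ℂ)
        - ((A b * Real.cos (2 * π * (φ b + η * (t - b))) : ℝ) : ℂ)
        = ((A t * Real.cos (2 * π * φ t)
            - A b * Real.cos (2 * π * (φ b + η * (t - b))) : ℝ) : ℂ) := by
      push_cast; ring
    rw [ecast, Complex.norm_real, Real.norm_eq_abs]
    have key : |A t * Real.cos (2 * π * φ t) - A b * Real.cos (2 * π * (φ b + η * (t - b)))|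
        ≤ |A t - A b| * 1 + A b * |2 * π * φ t - 2 * π * (φ b + η * (t - b))| := by
      have e : A t * Real.cos (2 * π * φ t) - A b * Real.cos (2 * π * (φ b + η * (t - b)))
          = (A t - A b) * Real.cos (2 * π * φ t)
            + A b * (Real.cos (2 * π * φ t) - Real.cos (2 * π * (φ b + η * (t - b)))) := by ring
      rw [e]
      refine (abs_add_le _ _).trans ?_
      rw [abs_mul, abs_mul, abs_of_pos (hApos b)]
      exact add_le_add (mul_le_mul_of_nonneg_left (Real.abs_cos_le_one _) (abs_nonneg _))
        (mul_le_mul_of_nonneg_left (hcosl _ _) (hApos b).le)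
    have e2 : |2 * π * φ t - 2 * π * (φ b + η * (t - b))|
        = 2 * π * |φ t - φ b - η * (t - b)| := by
      rw [show 2 * π * φ t - 2 * π * (φ b + η * (t - b))
          = 2 * π * (φ t - φ b - η * (t - b)) by ring, abs_mul,
        abs_of_pos (by positivity : (0:ℝ) < 2 * π)]
    calc |A t * Real.cos (2 * π * φ t) - A b * Real.cos (2 * π * (φ b + η * (t - b)))|
        ≤ |A t - A b| * 1 + A b * |2 * π * φ t - 2 * π * (φ b + η * (t - b))| := key
      _ ≤ (ε * M₂ * |t - b|) * 1 + Asup * (2 * π * (ε * M₂ * (t - b) ^ 2 / 2)) := by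
          rw [e2]
          gcongr
          · exact hAlip t
          · exact hAle b
          · exact hTq t
      _ = ε * M₂ * |t - b| + π * (ε * M₂) * Asup * (t - b) ^ 2 := by ring
  -- continuity and boundedness of f, ft
  have hfe : f = fun t => ((A t * Real.cos (2 * π * φ t) : ℝ) : ℂ) := funext hf
  have hfc : Continuous f := by
    rw [hfe]
    exact Complex.continuous_ofReal.comp
      (hA.continuous.mul (Real.continuous_cos.comp (continuous_const.mul hφ.continuous)))
  have hfbdd : ∀ t, ‖f t‖ ≤ Asup := by
    intro t
    rw [hf t, Complex.norm_real, Real.norm_eq_abs, abs_mul]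
    calc |A t| * |Real.cos (2 * π * φ t)| ≤ A t * 1 := by
          rw [abs_of_pos (hApos t)]
          exact mul_le_mul_of_nonneg_left (Real.abs_cos_le_one _) (hApos t).le
      _ ≤ Asup := by rw [mul_one]; exact hAle t
  have hftc : Continuous ft := by
    rw [hftdef]
    exact Complex.continuous_ofReal.comp (continuous_const.mul
      (Real.continuous_cos.comp (continuous_const.mul (continuous_const.add
        (continuous_const.mul (continuous_id.sub continuous_const))))))
  have hftbdd : ∀ t, ‖ft t‖ ≤ Asup := by
    intro t
    rw [hftdef]
    simp only
    rw [Complex.norm_real, Real.norm_eq_abs, abs_mul]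
    calc |A b| * |Real.cos (2 * π * (φ b + η * (t - b)))| ≤ A b * 1 := by
          rw [abs_of_pos (hApos b)]
          exact mul_le_mul_of_nonneg_left (Real.abs_cos_le_one _) (hApos b).le
      _ ≤ Asup := by rw [mul_one]; exact hAle b
  -- the renormalized wavelet integrals
  set F : ℝ → ℂ := fun a => ∫ x : ℝ, f (b + a * x) * (starRingEnd ℂ) (ψ x) with hFdef
  set Ft : ℝ → ℂ := fun a => ∫ x : ℝ, ft (b + a * x) * (starRingEnd ℂ) (ψ x) with hFtdef
  have hFint : ∀ a : ℝ, Integrable (fun x : ℝ => f (b + a * x) * (starRingEnd ℂ) (ψ x)) :=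
    fun a => (conj_integrable ψ).bdd_mul (c := Asup)
      ((hfc.comp (continuous_const.add (continuous_const.mul continuous_id))).aestronglyMeasurable)
      (Filter.Eventually.of_forall fun x => hfbdd _)
  have hFtint : ∀ a : ℝ, Integrable (fun x : ℝ => ft (b + a * x) * (starRingEnd ℂ) (ψ x)) :=
    fun a => (conj_integrable ψ).bdd_mul (c := Asup)
      ((hftc.comp (continuous_const.add (continuous_const.mul continuous_id))).aestronglyMeasurable)
      (Filter.Eventually.of_forall fun x => hftbdd _)
  -- Step 1 : change of variables in the CWT
  have hstep1 : ∀ a ∈ Set.Icc l u, CWT (⇑ψ) f a b * ((Real.sqrt a ^ 3 : ℝ) : ℂ)⁻¹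
      = ((a : ℝ) : ℂ)⁻¹ * F a := by
    intro a ha
    have hapos := hIccpos a ha
    have hane : a ≠ 0 := hapos.ne'
    have hcov : (∫ t : ℝ, f t * (starRingEnd ℂ) (ψ ((t - b) / a))) = |a| • F a := by
      rw [integral_scale' (fun t => f t * (starRingEnd ℂ) (ψ ((t - b) / a))) b hane]
      have hx : ∀ x : ℝ, (b + a * x - b) / a = x := fun x => by field_simp; ring
      simp only [hx, hFdef]
    unfold CWT
    rw [hcov, abs_of_pos hapos, Complex.real_smul]
    have hs : 0 < Real.sqrt a := Real.sqrt_pos.mpr hapos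
    have hsne : ((Real.sqrt a : ℝ) : ℂ) ≠ 0 := by exact_mod_cast hs.ne'
    have hsa : ((Real.sqrt a : ℝ) : ℂ) ^ 2 = ((a : ℝ) : ℂ) := by
      rw [← Complex.ofReal_pow, Real.sq_sqrt hapos.le]
    rw [Complex.ofReal_pow, ← hsa]
    field_simp
  -- Step 2 : exact formula for Ft
  have hstep2 : ∀ a ∈ Set.Icc l u, Ft a
      = ((A b : ℝ) : ℂ) * ((1 / 2 : ℂ) * Complex.exp (((2 * π * φ b : ℝ) : ℂ) * Complex.I) *
          (starRingEnd ℂ) (FourierTransform.fourier (⇑ψ : ℝ → ℂ) (η * a))) := by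
    intro a ha
    have hapos := hIccpos a ha
    have hwpos : 0 < η * a := mul_pos hηpos hapos
    have he : Ft a = ∫ x : ℝ, ((A b : ℝ) : ℂ) *
        (((Real.cos (2 * π * (φ b + (η * a) * x)) : ℝ) : ℂ) * (starRingEnd ℂ) (ψ x)) := by
      apply integral_congr_ae
      filter_upwards with x
      simp only [hftdef]
      rw [show φ b + η * (b + a * x - b) = φ b + (η * a) * x by ring]
      push_cast
      ring
    rw [he, integral_const_mul, cos_integral ψ hΔ1 hsupp (φ b) (η * a) hwpos]
  -- the value of Cψ as an integral over the band
  have hg0 : ∀ ξ : ℝ, ξ ∉ Set.Icc (1 - Δ) (1 + Δ) →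
      (starRingEnd ℂ) (FourierTransform.fourier (⇑ψ : ℝ → ℂ) ξ) * ((ξ : ℝ) : ℂ)⁻¹ = 0 := by
    intro ξ hξ
    rw [hsupp ξ hξ, map_zero, zero_mul]
  have hCψ2 : Cψ = ∫ ξ in Set.Icc (1 - Δ) (1 + Δ),
      (starRingEnd ℂ) (FourierTransform.fourier (⇑ψ : ℝ → ℂ) ξ) * ((ξ : ℝ) : ℂ)⁻¹ := by
    have e1 : (∫ ξ in Set.Ioi (0:ℝ),
        (starRingEnd ℂ) (FourierTransform.fourier (⇑ψ : ℝ → ℂ) ξ) * ((ξ : ℝ) : ℂ)⁻¹)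
        = ∫ ξ : ℝ, (starRingEnd ℂ) (FourierTransform.fourier (⇑ψ : ℝ → ℂ) ξ) * ((ξ : ℝ) : ℂ)⁻¹ := by
      apply setIntegral_eq_integral_of_forall_compl_eq_zero
      intro ξ hξ
      apply hg0
      intro hmem
      exact hξ (Set.mem_Ioi.mpr (lt_of_lt_of_le (by linarith) hmem.1))
    have e2 : (∫ ξ in Set.Icc (1 - Δ) (1 + Δ),
        (starRingEnd ℂ) (FourierTransform.fourier (⇑ψ : ℝ → ℂ) ξ) * ((ξ : ℝ) : ℂ)⁻¹)
        = ∫ ξ : ℝ, (starRingEnd ℂ) (FourierTransform.fourier (⇑ψ : ℝ → ℂ) ξ) * ((ξ : ℝ) : ℂ)⁻¹ :=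
      setIntegral_eq_integral_of_forall_compl_eq_zero hg0
    rw [hCψ, e1, ← e2]
  -- Step 3 : the main term
  have hmain : (∫ a in Set.Icc l u, ((a : ℝ) : ℂ)⁻¹ * Ft a)
      = (1 / 2 : ℂ) * Cψ * (A b : ℂ) * Complex.exp (2 * Real.pi * Complex.I * φ b) := by
    have hcongr : Set.EqOn (fun a => ((a : ℝ) : ℂ)⁻¹ * Ft a)
        (fun a => (((A b : ℝ) : ℂ) * ((1 / 2 : ℂ) *
            Complex.exp (((2 * π * φ b : ℝ) : ℂ) * Complex.I)) * ((η : ℝ) : ℂ)) *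
          ((starRingEnd ℂ) (FourierTransform.fourier (⇑ψ : ℝ → ℂ) (η * a)) * (((η * a : ℝ)) : ℂ)⁻¹))
        (Set.Icc l u) := by
      intro a ha
      have hapos := hIccpos a ha
      simp only
      rw [hstep2 a ha]
      have hane : ((a : ℝ) : ℂ) ≠ 0 := by exact_mod_cast hapos.ne'
      have hηne : ((η : ℝ) : ℂ) ≠ 0 := by exact_mod_cast hηpos.ne'
      have h1 : ((η * a : ℝ) : ℂ) = ((η : ℝ) : ℂ) * ((a : ℝ) : ℂ) := by push_cast; ring
      rw [h1]
      field_simp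
    rw [setIntegral_congr_fun measurableSet_Icc hcongr, integral_const_mul]
    have hchange : (∫ a in Set.Icc l u,
        (starRingEnd ℂ) (FourierTransform.fourier (⇑ψ : ℝ → ℂ) (η * a)) * (((η * a : ℝ)) : ℂ)⁻¹)
        = (η : ℝ)⁻¹ • ∫ ξ in Set.Icc (1 - Δ) (1 + Δ),
            (starRingEnd ℂ) (FourierTransform.fourier (⇑ψ : ℝ → ℂ) ξ) * ((ξ : ℝ) : ℂ)⁻¹ := by
      rw [integral_Icc_eq_integral_Ioc, ← intervalIntegral.integral_of_le hlu]
      rw [intervalIntegral.integral_comp_mul_left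
        (fun ξ => (starRingEnd ℂ) (FourierTransform.fourier (⇑ψ : ℝ → ℂ) ξ) * ((ξ : ℝ) : ℂ)⁻¹) hηpos.ne']
      rw [show η * l = 1 - Δ by rw [hldef]; field_simp,
        show η * u = 1 + Δ by rw [hudef]; field_simp]
      rw [intervalIntegral.integral_of_le (by linarith), ← integral_Icc_eq_integral_Ioc]
    rw [hchange, ← hCψ2]
    rw [Complex.real_smul]
    have hηne : ((η : ℝ) : ℂ) ≠ 0 := by exact_mod_cast hηpos.ne'
    have hexp : Complex.exp (((2 * π * φ b : ℝ) : ℂ) * Complex.I)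
        = Complex.exp (2 * Real.pi * Complex.I * (φ b : ℂ)) := by
      congr 1
      push_cast
      ring
    rw [hexp]
    push_cast
    field_simp
  -- Step 4 : continuity and integrability
  have hFcont : Continuous F := by
    rw [hFdef]
    apply continuous_of_dominated (bound := fun x => Asup * ‖ψ x‖)
    · intro a
      exact ((hfc.comp (continuous_const.add (continuous_const.mul
        continuous_id))).mul (Complex.continuous_conj.comp ψ.continuous)).aestronglyMeasurable
    · intro a
      filter_upwards with x
      rw [norm_mul, RCLike.norm_conj]
      exact mul_le_mul_of_nonneg_right (hfbdd _) (norm_nonneg _)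
    · exact (ψ.integrable.norm.const_mul Asup)
    · filter_upwards with x
      exact (hfc.comp (continuous_const.add ((continuous_id.mul continuous_const)))).mul
        continuous_const
  have hFtcont : Continuous Ft := by
    rw [hFtdef]
    apply continuous_of_dominated (bound := fun x => Asup * ‖ψ x‖)
    · intro a
      exact ((hftc.comp (continuous_const.add (continuous_const.mul
        continuous_id))).mul (Complex.continuous_conj.comp ψ.continuous)).aestronglyMeasurable
    · intro a
      filter_upwards with x
      rw [norm_mul, RCLike.norm_conj]
      exact mul_le_mul_of_nonneg_right (hftbdd _) (norm_nonneg _)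
    · exact (ψ.integrable.norm.const_mul Asup)
    · filter_upwards with x
      exact (hftc.comp (continuous_const.add ((continuous_id.mul continuous_const)))).mul
        continuous_const
  have hinv : ContinuousOn (fun a : ℝ => ((a : ℝ) : ℂ)⁻¹) (Set.Icc l u) :=
    ContinuousOn.inv₀ Complex.continuous_ofReal.continuousOn
      (fun a ha => by exact_mod_cast (hIccpos a ha).ne')
  have hInt1 : IntegrableOn (fun a => ((a : ℝ) : ℂ)⁻¹ * F a) (Set.Icc l u) :=
    (hinv.mul hFcont.continuousOn).integrableOn_compact isCompact_Icc
  have hInt2 : IntegrableOn (fun a => ((a : ℝ) : ℂ)⁻¹ * Ft a) (Set.Icc l u) :=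
    (hinv.mul hFtcont.continuousOn).integrableOn_compact isCompact_Icc
  -- Schwartz moment integrability
  have hI1int : Integrable (fun x : ℝ => |x| * ‖ψ x‖) := by
    have := ψ.integrable_pow_mul (volume : Measure ℝ) 1
    simpa [Real.norm_eq_abs] using this
  have hI2int : Integrable (fun x : ℝ => x ^ 2 * ‖ψ x‖) := by
    have := ψ.integrable_pow_mul (volume : Measure ℝ) 2
    simpa [Real.norm_eq_abs, sq_abs] using this
  have hI₁0 : 0 ≤ I₁ := by
    rw [hI₁]; exact integral_nonneg (fun x => by positivity)
  have hI₂0 : 0 ≤ I₂ := by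
    rw [hI₂]; exact integral_nonneg (fun x => by positivity)
  -- Step 5 : pointwise bound on the error
  have hpt : ∀ a ∈ Set.Icc l u, ‖((a : ℝ) : ℂ)⁻¹ * F a - ((a : ℝ) : ℂ)⁻¹ * Ft a‖
      ≤ ε * M₂ * I₁ + π * (ε * M₂) * Asup * I₂ * a := by
    intro a ha
    have hapos := hIccpos a ha
    have hFsub : F a - Ft a
        = ∫ x : ℝ, (f (b + a * x) - ft (b + a * x)) * (starRingEnd ℂ) (ψ x) := by
      rw [hFdef, hFtdef]
      simp only
      rw [← integral_sub (hFint a) (hFtint a)]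
      congr 1
      funext x
      ring
    have hbnd : ‖F a - Ft a‖ ≤ ε * M₂ * a * I₁ + π * (ε * M₂) * Asup * a ^ 2 * I₂ := by
      rw [hFsub]
      have hmaj : Integrable (fun x : ℝ =>
          ε * M₂ * a * (|x| * ‖ψ x‖) + π * (ε * M₂) * Asup * a ^ 2 * (x ^ 2 * ‖ψ x‖)) :=
        (hI1int.const_mul _).add (hI2int.const_mul _)
      refine (norm_integral_le_of_norm_le hmaj (Filter.Eventually.of_forall fun x => ?_)).trans
        (le_of_eq ?_)
      · rw [norm_mul, RCLike.norm_conj]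
        calc ‖f (b + a * x) - ft (b + a * x)‖ * ‖ψ x‖
            ≤ (ε * M₂ * |b + a * x - b| + π * (ε * M₂) * Asup * (b + a * x - b) ^ 2) * ‖ψ x‖ := by
              gcongr
              exact hdiff_bd _
          _ = ε * M₂ * a * (|x| * ‖ψ x‖) + π * (ε * M₂) * Asup * a ^ 2 * (x ^ 2 * ‖ψ x‖) := by
              rw [show b + a * x - b = a * x by ring, abs_mul, abs_of_pos hapos]
              ring
      · rw [integral_add (hI1int.const_mul _) (hI2int.const_mul _), integral_const_mul,
          integral_const_mul, ← hI₁, ← hI₂]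
    rw [← mul_sub, norm_mul]
    have hnrm : ‖((a : ℝ) : ℂ)⁻¹‖ = a⁻¹ := by
      rw [norm_inv, Complex.norm_real, Real.norm_eq_abs, abs_of_pos hapos]
    rw [hnrm]
    calc a⁻¹ * ‖F a - Ft a‖
        ≤ a⁻¹ * (ε * M₂ * a * I₁ + π * (ε * M₂) * Asup * a ^ 2 * I₂) := by
          gcongr
      _ = ε * M₂ * I₁ + π * (ε * M₂) * Asup * I₂ * a := by
          field_simp
  -- Step 6 : integral of the bound
  have hIbound : (∫ a in Set.Icc l u, (ε * M₂ * I₁ + π * (ε * M₂) * Asup * I₂ * a))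
      = ε * M₂ * I₁ * (u - l) + π * (ε * M₂) * Asup * I₂ * ((u ^ 2 - l ^ 2) / 2) := by
    rw [integral_Icc_eq_integral_Ioc, ← intervalIntegral.integral_of_le hlu]
    rw [intervalIntegral.integral_add intervalIntegrable_const
      ((by fun_prop : Continuous fun x : ℝ => π * (ε * M₂) * Asup * I₂ * x).intervalIntegrable l u),
      intervalIntegral.integral_const, intervalIntegral.integral_const_mul, integral_id]
    simp only [smul_eq_mul]
    ring
  -- final assembly
  calc ‖(∫ a in Set.Icc l u, CWT (⇑ψ) f a b * ((Real.sqrt a ^ 3 : ℝ) : ℂ)⁻¹) -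
          (1 / 2 : ℂ) * Cψ * (A b : ℂ) * Complex.exp (2 * Real.pi * Complex.I * φ b)‖
      = ‖(∫ a in Set.Icc l u, ((a : ℝ) : ℂ)⁻¹ * F a)
          - ∫ a in Set.Icc l u, ((a : ℝ) : ℂ)⁻¹ * Ft a‖ := by
        rw [setIntegral_congr_fun measurableSet_Icc hstep1, hmain]
    _ = ‖∫ a in Set.Icc l u, (((a : ℝ) : ℂ)⁻¹ * F a - ((a : ℝ) : ℂ)⁻¹ * Ft a)‖ := by
        rw [integral_sub hInt1 hInt2]
    _ ≤ ∫ a in Set.Icc l u, (ε * M₂ * I₁ + π * (ε * M₂) * Asup * I₂ * a) := by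
        apply norm_integral_le_of_norm_le
        · exact (continuous_const.add (continuous_const.mul
            continuous_id)).continuousOn.integrableOn_compact isCompact_Icc
        · rw [ae_restrict_iff' measurableSet_Icc]
          exact Filter.Eventually.of_forall hpt
    _ = ε * M₂ * I₁ * (u - l) + π * (ε * M₂) * Asup * I₂ * ((u ^ 2 - l ^ 2) / 2) := hIbound
    _ = ε * M₂ * I₁ * (2 * Δ) / η + π * (ε * M₂) * Asup * I₂ * (2 * Δ) / η ^ 2 := by
        rw [hldef, hudef]
        field_simp
        ring
    _ ≤ ε * M₂ * I₁ * (2 * Δ) / c₁ + π * (ε * M₂) * Asup * I₂ * (2 * Δ) / c₁ ^ 2 := by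
        have h1 : 0 ≤ ε * M₂ * I₁ * (2 * Δ) := by positivity
        have h2 : 0 ≤ π * (ε * M₂) * Asup * I₂ * (2 * Δ) := by positivity
        gcongr
    _ = ε * M₂ * (2 * Δ * I₁ / c₁ + 2 * Real.pi * Δ * Asup * I₂ / c₁ ^ 2) := by ring
end

section
/- Let ψ : ℝ → ℂ be a Schwartz function and let f, e : ℝ → ℂ be bounded and measurable. Then for all a > 0 and b ∈ ℝ: (i) |W_{f+e}(a,b) − W_f(a,b)| ≤ ‖e‖∞ · a^{1/2} · ‖ψ‖_{L¹}; and (ii) |∂_b W_{f+e}(a,b) − ∂_b W_f(a,b)| ≤ ‖e‖∞ · a^{−1/2} · ‖ψ'‖_{L¹}, where ‖e‖∞ = sup_t |e(t)|. In particular, the continuous wavelet transform and its time derivative, and hence the synchrosqueezing-based estimation, are stable under bounded perturbations of the signal. -/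
open MeasureTheory

-- integrability of g * conj(φ((t-b)/a))
lemma aux_int (φ : SchwartzMap ℝ ℂ) {g : ℝ → ℂ} (hgm : Measurable g) {M : ℝ}
    (hM : ∀ t, ‖g t‖ ≤ M) {a : ℝ} (ha : 0 < a) (b : ℝ) :
    Integrable (fun t => g t * (starRingEnd ℂ) (φ ((t - b) / a))) := by
  have hφ : Integrable (fun t : ℝ => φ ((t - b) / a)) :=
    (φ.integrable.comp_div ha.ne').comp_sub_right b
  refine (hφ.norm.const_mul M).mono' ?_ ?_
  · exact (hgm.aestronglyMeasurable.mul
      (((continuous_star.comp (φ.continuous.comp (by fun_prop))) : Continuous _).aestronglyMeasurable))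
  · filter_upwards with t
    rw [norm_mul, RCLike.norm_conj]
    exact mul_le_mul_of_nonneg_right (hM t) (norm_nonneg _)

lemma aux_norm (φ : SchwartzMap ℝ ℂ) {g : ℝ → ℂ} {M : ℝ}
    (hM : ∀ t, ‖g t‖ ≤ M) {a : ℝ} (ha : 0 < a) (b : ℝ) :
    ‖∫ t : ℝ, g t * (starRingEnd ℂ) (φ ((t - b) / a))‖ ≤ M * (a * ∫ x : ℝ, ‖φ x‖) := by
  have hφ : Integrable (fun t : ℝ => ‖φ ((t - b) / a)‖) :=
    (((φ.integrable.comp_div ha.ne').comp_sub_right b)).norm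
  have h1 : ‖∫ t : ℝ, g t * (starRingEnd ℂ) (φ ((t - b) / a))‖ ≤
      ∫ t : ℝ, M * ‖φ ((t - b) / a)‖ := by
    refine norm_integral_le_of_norm_le (hφ.const_mul M) ?_
    filter_upwards with t
    rw [norm_mul, RCLike.norm_conj]
    exact mul_le_mul_of_nonneg_right (hM t) (norm_nonneg _)
  have h2 : (∫ t : ℝ, ‖φ ((t - b) / a)‖) = a * ∫ x : ℝ, ‖φ x‖ := by
    have := MeasureTheory.integral_sub_right_eq_self (μ := volume) (fun x : ℝ => ‖φ (x / a)‖) b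
    rw [this, Measure.integral_comp_div (fun x : ℝ => ‖φ x‖) a, abs_of_pos ha, smul_eq_mul]
  rw [integral_const_mul, h2] at h1
  exact h1

-- decay of a Schwartz function
lemma aux_decay (φ : SchwartzMap ℝ ℂ) : ∃ D : ℝ, 0 ≤ D ∧ ∀ x : ℝ, ‖φ x‖ ≤ D * (1 + x ^ 2)⁻¹ := by
  obtain ⟨C₀, hC₀, h0⟩ := φ.decay 0 0
  obtain ⟨C₂, hC₂, h2⟩ := φ.decay 2 0
  refine ⟨C₀ + C₂, by positivity, fun x => ?_⟩
  have e0 := h0 x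
  have e2 := h2 x
  simp only [pow_zero, one_mul, norm_iteratedFDeriv_zero] at e0 e2
  rw [Real.norm_eq_abs, sq_abs] at e2
  rw [mul_comm, inv_mul_eq_div, le_div_iff₀ (by positivity)]
  nlinarith [norm_nonneg (φ x), sq_nonneg x]

-- derivative of the inner integral
lemma aux_deriv (ψ : SchwartzMap ℝ ℂ) {g : ℝ → ℂ} (hgm : Measurable g) {M : ℝ}
    (hM : ∀ t, ‖g t‖ ≤ M) {a : ℝ} (ha : 0 < a) (b : ℝ) :
    HasDerivAt (fun b' : ℝ => ∫ t : ℝ, g t * (starRingEnd ℂ) (ψ ((t - b') / a)))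
      (∫ t : ℝ, (-(a : ℂ)⁻¹ * g t) *
        (starRingEnd ℂ) ((SchwartzMap.derivCLM ℝ ℂ ψ) ((t - b) / a))) b := by
  have hM0 : 0 ≤ M := le_trans (norm_nonneg _) (hM 0)
  set φ' : SchwartzMap ℝ ℂ := SchwartzMap.derivCLM ℝ ℂ ψ with hφ'
  have hderiv_eq : ∀ x : ℝ, deriv (⇑ψ) x = φ' x := fun x => (SchwartzMap.derivCLM_apply ℝ ψ x).symm
  obtain ⟨D, hD0, hD⟩ := aux_decay φ'
  set F : ℝ → ℝ → ℂ := fun b' t => g t * (starRingEnd ℂ) (ψ ((t - b') / a)) with hF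
  set F' : ℝ → ℝ → ℂ := fun b' t => (-(a : ℂ)⁻¹ * g t) *
      (starRingEnd ℂ) (φ' ((t - b') / a)) with hF'
  set bound : ℝ → ℝ := fun t => (M * a⁻¹ * (D * (5 * (1 + a ^ 2)))) * (1 + (t - b) ^ 2)⁻¹
    with hbound
  have key := hasDerivAt_integral_of_dominated_loc_of_deriv_le (F := F) (F' := F') (x₀ := b)
    (bound := bound) (s := Metric.ball b 1) (Metric.ball_mem_nhds b one_pos)
    (Filter.Eventually.of_forall fun b' => (aux_int ψ hgm hM ha b').aestronglyMeasurable)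
    (aux_int ψ hgm hM ha b)
    ?meas' ?bnd ?bint ?diff
  · exact key.2
  case meas' =>
    exact ((measurable_const.mul hgm).aestronglyMeasurable.mul
      ((continuous_star.comp (φ'.continuous.comp (by fun_prop)) : Continuous _).aestronglyMeasurable))
  case bnd =>
    filter_upwards with t b' hb'
    have hb1 : (b' - b) ^ 2 ≤ 1 := by
      have := mem_ball_iff_norm.mp hb'
      rw [Real.norm_eq_abs] at this
      nlinarith [abs_nonneg (b' - b), sq_abs (b' - b)]
    have hkey : ‖φ' ((t - b') / a)‖ ≤ D * (5 * (1 + a ^ 2)) * (1 + (t - b) ^ 2)⁻¹ := by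
      refine le_trans (hD _) ?_
      rw [inv_eq_one_div, inv_eq_one_div, mul_one_div, mul_one_div,
        div_le_div_iff₀ (by positivity) (by positivity)]
      set u : ℝ := (t - b') / a with hu
      have hua : t - b' = u * a := by rw [hu]; field_simp
      have hs : t - b = u * a + (b' - b) := by rw [← hua]; ring
      rw [hs]
      nlinarith [mul_nonneg hD0 (sq_nonneg (u * a - (b' - b))),
        mul_nonneg hD0 (sq_nonneg u), mul_nonneg hD0 (sq_nonneg a),
        mul_nonneg hD0 (sq_nonneg (u * a)), mul_nonneg hD0 (sq_nonneg (a * u)),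
        mul_nonneg hD0 (mul_nonneg (sq_nonneg a) (sq_nonneg u)),
        mul_nonneg hD0 (by linarith : (0:ℝ) ≤ 1 - (b' - b) ^ 2)]
    have hnorm : ‖F' b' t‖ = a⁻¹ * ‖g t‖ * ‖φ' ((t - b') / a)‖ := by
      simp [hF', norm_mul, RCLike.norm_conj, Complex.norm_real, abs_of_pos ha, mul_comm]
    rw [hnorm]
    have h := mul_le_mul (mul_le_mul_of_nonneg_left (hM t) (inv_nonneg.2 ha.le)) hkey
      (norm_nonneg _) (by positivity)
    refine le_trans h (le_of_eq ?_)
    simp only [hbound]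
    ring
  case bint =>
    exact (integrable_inv_one_add_sq.comp_sub_right b).const_mul _
  case diff =>
    filter_upwards with t b' hb'
    have h1 : HasDerivAt (fun b' : ℝ => (t - b') / a) (-1 / a) b' :=
      ((hasDerivAt_id b').const_sub t).div_const a
    have h2 : HasDerivAt (⇑ψ) (deriv (⇑ψ) ((t - b') / a)) ((t - b') / a) :=
      (ψ.differentiable.differentiableAt).hasDerivAt
    have h3 := (h2.scomp b' h1 : HasDerivAt (fun b' : ℝ => ψ ((t - b') / a)) _ b')
    have h4 := h3.star
    have h5 := h4.const_mul (g t)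
    refine h5.congr_deriv ?_
    simp only [hF', RCLike.star_def]
    rw [hderiv_eq]
    have hsm : ((-1/a : ℝ) • (φ' ((t - b') / a)) : ℂ) = -(↑a)⁻¹ * φ' ((t - b') / a) := by
      rw [Complex.real_smul]; push_cast; ring
    rw [hsm, map_mul, map_neg, map_inv₀, Complex.conj_ofReal]
    ring

theorem stmt13 (ψ : SchwartzMap ℝ ℂ) (f e : ℝ → ℂ)
    (hfm : Measurable f) (hem : Measurable e)
    (hfb : BddAbove (Set.range fun t : ℝ => ‖f t‖))
    (heb : BddAbove (Set.range fun t : ℝ => ‖e t‖)) :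
    ∀ a : ℝ, 0 < a → ∀ b : ℝ,
      (‖CWT (⇑ψ) (fun t => f t + e t) a b - CWT (⇑ψ) f a b‖ ≤
        (⨆ t : ℝ, ‖e t‖) * Real.sqrt a * ∫ x : ℝ, ‖ψ x‖) ∧
      (∃ W₁ W₂ : ℂ,
        HasDerivAt (fun b' : ℝ => CWT (⇑ψ) (fun t => f t + e t) a b') W₁ b ∧
        HasDerivAt (fun b' : ℝ => CWT (⇑ψ) f a b') W₂ b ∧
        ‖W₁ - W₂‖ ≤ (⨆ t : ℝ, ‖e t‖) * (Real.sqrt a)⁻¹ * ∫ x : ℝ, ‖deriv (⇑ψ) x‖) := by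
  intro a ha b
  set Me : ℝ := ⨆ t : ℝ, ‖e t‖ with hMe_def
  set Mf : ℝ := ⨆ t : ℝ, ‖f t‖ with hMf_def
  have hMe : ∀ t, ‖e t‖ ≤ Me := fun t => le_ciSup heb t
  have hMf : ∀ t, ‖f t‖ ≤ Mf := fun t => le_ciSup hfb t
  have hMe0 : 0 ≤ Me := le_trans (norm_nonneg _) (hMe 0)
  have hMfe : ∀ t, ‖f t + e t‖ ≤ Mf + Me :=
    fun t => (norm_add_le _ _).trans (add_le_add (hMf t) (hMe t))
  have hfem : Measurable (fun t => f t + e t) := hfm.add hem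
  have hsa : (0 : ℝ) < Real.sqrt a := Real.sqrt_pos.2 ha
  have hs2 : a = Real.sqrt a * Real.sqrt a := (Real.mul_self_sqrt ha.le).symm
  have hnormc : ‖((Real.sqrt a : ℝ) : ℂ)⁻¹‖ = (Real.sqrt a)⁻¹ := by
    rw [norm_inv, Complex.norm_real, Real.norm_eq_abs, abs_of_pos hsa]
  constructor
  · -- part (i)
    have hint_f := aux_int ψ hfm hMf ha b
    have hint_fe := aux_int ψ hfem hMfe ha b
    have hdiff : CWT (⇑ψ) (fun t => f t + e t) a b - CWT (⇑ψ) f a b =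
        ((Real.sqrt a : ℝ) : ℂ)⁻¹ * ∫ t : ℝ, e t * (starRingEnd ℂ) (ψ ((t - b) / a)) := by
      unfold CWT
      rw [← mul_sub, ← integral_sub hint_fe hint_f]
      congr 1
      apply integral_congr_ae
      filter_upwards with t
      ring
    rw [hdiff, norm_mul, hnormc]
    have h1 := aux_norm ψ hMe ha b
    refine le_trans (mul_le_mul_of_nonneg_left h1 (inv_nonneg.2 hsa.le)) (le_of_eq ?_)
    rw [hs2]
    set s := Real.sqrt a
    field_simp
    rw [Real.sqrt_sq hsa.le]
  · -- part (ii)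
    set φ' : SchwartzMap ℝ ℂ := SchwartzMap.derivCLM ℝ ℂ ψ with hφ'
    have hderiv_eq : ∀ x : ℝ, deriv (⇑ψ) x = φ' x :=
      fun x => (SchwartzMap.derivCLM_apply ℝ ψ x).symm
    have hd_fe := (aux_deriv ψ hfem hMfe ha b).const_mul (((Real.sqrt a : ℝ) : ℂ)⁻¹)
    have hd_f := (aux_deriv ψ hfm hMf ha b).const_mul (((Real.sqrt a : ℝ) : ℂ)⁻¹)
    refine ⟨_, _, hd_fe, hd_f, ?_⟩
    -- integrability of the two derivative integrands
    have hm_fe : Measurable (fun t => -(a : ℂ)⁻¹ * (f t + e t)) := measurable_const.mul hfem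
    have hm_f : Measurable (fun t => -(a : ℂ)⁻¹ * f t) := measurable_const.mul hfm
    have hm_e : Measurable (fun t => -(a : ℂ)⁻¹ * e t) := measurable_const.mul hem
    have hca : ‖(-(a : ℂ)⁻¹ : ℂ)‖ = a⁻¹ := by
      rw [norm_neg, norm_inv, Complex.norm_real, Real.norm_eq_abs, abs_of_pos ha]
    have hb_fe : ∀ t, ‖-(a : ℂ)⁻¹ * (f t + e t)‖ ≤ a⁻¹ * (Mf + Me) := by
      intro t; rw [norm_mul, hca]
      exact mul_le_mul_of_nonneg_left (hMfe t) (inv_nonneg.2 ha.le)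
    have hb_f : ∀ t, ‖-(a : ℂ)⁻¹ * f t‖ ≤ a⁻¹ * Mf := by
      intro t; rw [norm_mul, hca]
      exact mul_le_mul_of_nonneg_left (hMf t) (inv_nonneg.2 ha.le)
    have hb_e : ∀ t, ‖-(a : ℂ)⁻¹ * e t‖ ≤ a⁻¹ * Me := by
      intro t; rw [norm_mul, hca]
      exact mul_le_mul_of_nonneg_left (hMe t) (inv_nonneg.2 ha.le)
    have hint_fe' := aux_int φ' hm_fe hb_fe ha b
    have hint_f' := aux_int φ' hm_f hb_f ha b
    have hdiff : ((Real.sqrt a : ℝ) : ℂ)⁻¹ *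
          (∫ t : ℝ, (-(a : ℂ)⁻¹ * (f t + e t)) * (starRingEnd ℂ) (φ' ((t - b) / a))) -
        ((Real.sqrt a : ℝ) : ℂ)⁻¹ *
          (∫ t : ℝ, (-(a : ℂ)⁻¹ * f t) * (starRingEnd ℂ) (φ' ((t - b) / a))) =
        ((Real.sqrt a : ℝ) : ℂ)⁻¹ *
          ∫ t : ℝ, (-(a : ℂ)⁻¹ * e t) * (starRingEnd ℂ) (φ' ((t - b) / a)) := by
      rw [← mul_sub, ← integral_sub hint_fe' hint_f']
      congr 1
      apply integral_congr_ae
      filter_upwards with t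
      ring
    rw [hdiff, norm_mul, hnormc]
    have h1 := aux_norm φ' hb_e ha b
    have hIeq : (∫ x : ℝ, ‖φ' x‖) = ∫ x : ℝ, ‖deriv (⇑ψ) x‖ := by
      apply integral_congr_ae
      filter_upwards with x
      rw [hderiv_eq]
    refine le_trans (mul_le_mul_of_nonneg_left h1 (inv_nonneg.2 hsa.le)) (le_of_eq ?_)
    rw [hIeq]
    field_simp
end
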